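/- arXiv:2107.10486 — 3 statements merged into one kernel-verified Lean document; each statement's English description precedes it below -/
import Mathlib

section
/- Let X be a C*-correspondence over A with universal covariant representation (Υ, t), let (π, Φ) be the C-covariant representation of X associated to the identity morphism [A, U_A] : X → X in ECCor, and let σ : O_X → K(A ⊗_A O_X) be the induced homomorphism (σ(t(x)) = Φ(x), σ(Υ(a)) = π(a)). Then the A–O_X correspondence isomorphism U : A ⊗_A O_X → O_X determined by a ⊗ S ↦ Υ(a)S satisfies U(σ(T)ξ) = T·U(ξ) for every T ∈ O_X and ξ ∈ A ⊗_A O_X; that is, A ⊗_A O_X and O_X are isomorphic as O_X–O_X correspondences. -/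
/-!  Common framework: C*-correspondences, tensor products, representations,
Cuntz–Pimsner algebras, and the category `ECCor`, axiomatised as structures. -/

noncomputable section

universe u

/-- The closed linear span of a subset of a topological `ℂ`-module. -/
def clspan {V : Type*} [AddCommMonoid V] [Module ℂ V] [TopologicalSpace V] (s : Set V) : Set V :=
  closure ((Submodule.span ℂ s : Submodule ℂ V) : Set V)

/-- A (nondegenerate) C*-correspondence from `A` to `B`: a right Hilbert `B`-module `X`
equipped with a left action of `A` by adjointable operators, such that `A · X` is dense. -/
structure Corr (A : Type u) (B : Type u)
    [NonUnitalCStarAlgebra A] [NonUnitalCStarAlgebra B] : Type (u + 1) where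
  /-- the underlying module -/
  X : Type u
  [nacg : NormedAddCommGroup X]
  [nsp : NormedSpace ℂ X]
  [cs : CompleteSpace X]
  /-- the `B`-valued inner product `⟨·,·⟩_B` -/
  ip : X → X → B
  /-- the right action of `B` -/
  sm : X → B → X
  /-- the left action of `A` -/
  la : A → X → X
  sm_add : ∀ (x y : X) (b : B), sm (x + y) b = sm x b + sm y b
  sm_add' : ∀ (x : X) (b c : B), sm x (b + c) = sm x b + sm x c
  sm_mul : ∀ (x : X) (b c : B), sm (sm x b) c = sm x (b * c)
  sm_smul : ∀ (z : ℂ) (x : X) (b : B), sm (z • x) b = z • sm x b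
  sm_smul' : ∀ (z : ℂ) (x : X) (b : B), sm x (z • b) = z • sm x b
  sm_bound : ∀ (x : X) (b : B), ‖sm x b‖ ≤ ‖x‖ * ‖b‖
  ip_add : ∀ (x y z : X), ip x (y + z) = ip x y + ip x z
  ip_smul : ∀ (z : ℂ) (x y : X), ip x (z • y) = z • ip x y
  ip_star : ∀ (x y : X), star (ip x y) = ip y x
  ip_sm : ∀ (x y : X) (b : B), ip x (sm y b) = ip x y * b
  ip_pos : ∀ x : X, ∃ b : B, ip x x = star b * b
  ip_norm : ∀ x : X, ‖x‖ ^ 2 = ‖ip x x‖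
  ip_bound : ∀ x y : X, ‖ip x y‖ ≤ ‖x‖ * ‖y‖
  la_add : ∀ (a : A) (x y : X), la a (x + y) = la a x + la a y
  la_smul : ∀ (a : A) (z : ℂ) (x : X), la a (z • x) = z • la a x
  la_add' : ∀ (a b : A) (x : X), la (a + b) x = la a x + la b x
  la_mul : ∀ (a b : A) (x : X), la (a * b) x = la a (la b x)
  la_smul' : ∀ (z : ℂ) (a : A) (x : X), la (z • a) x = z • la a x
  la_adj : ∀ (a : A) (x y : X), ip (la a x) y = ip x (la (star a) y)
  la_bound : ∀ (a : A) (x : X), ‖la a x‖ ≤ ‖a‖ * ‖x‖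
  la_sm : ∀ (a : A) (x : X) (b : B), la a (sm x b) = sm (la a x) b
  /-- nondegeneracy: `A · X` is dense in `X` -/
  nondeg : clspan {y : X | ∃ (a : A) (x : X), y = la a x} = Set.univ

attribute [instance] Corr.nacg Corr.nsp Corr.cs

namespace Corr

variable {A B : Type u} [NonUnitalCStarAlgebra A] [NonUnitalCStarAlgebra B]

/-- The left action, as a continuous linear operator. -/
def lmul (E : Corr A B) (a : A) : E.X →L[ℂ] E.X :=
  LinearMap.mkContinuous
    { toFun := E.la a
      map_add' := E.la_add a
      map_smul' := fun z x => E.la_smul a z x }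
    ‖a‖ (E.la_bound a)

/-- The rank-one operator `θ_{x,y} : z ↦ x · ⟨y, z⟩_B`. -/
def rankOne (E : Corr A B) (x y : E.X) : E.X →L[ℂ] E.X :=
  LinearMap.mkContinuous
    { toFun := fun z => E.sm x (E.ip y z)
      map_add' := fun u v => by
        show E.sm x (E.ip y (u + v)) = E.sm x (E.ip y u) + E.sm x (E.ip y v)
        rw [E.ip_add, E.sm_add']
      map_smul' := fun c u => by
        show E.sm x (E.ip y (c • u)) = c • E.sm x (E.ip y u)
        rw [E.ip_smul, E.sm_smul'] }
    (‖x‖ * ‖y‖)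
    (fun z => by
      calc ‖E.sm x (E.ip y z)‖ ≤ ‖x‖ * ‖E.ip y z‖ := E.sm_bound _ _
        _ ≤ ‖x‖ * (‖y‖ * ‖z‖) :=
            mul_le_mul_of_nonneg_left (E.ip_bound y z) (norm_nonneg x)
        _ = ‖x‖ * ‖y‖ * ‖z‖ := (mul_assoc _ _ _).symm)

/-- The compact operators `K(X)`: the closed linear span of the rank-one operators. -/
def compacts (E : Corr A B) : Set (E.X →L[ℂ] E.X) :=
  clspan (Set.range fun p : E.X × E.X => E.rankOne p.1 p.2)

/-- A correspondence is injective if its left action is injective. -/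
def Injective (E : Corr A B) : Prop := Function.Injective E.lmul

/-- A correspondence is regular if its left action is injective with values in the compacts. -/
def Regular (E : Corr A B) : Prop :=
  Function.Injective E.lmul ∧ ∀ a : A, E.lmul a ∈ E.compacts

/-- Katsura's ideal `J_X = φ_X⁻¹(K(X)) ∩ (ker φ_X)^⊥` of a correspondence over `A`. -/
def katsuraIdeal {A : Type u} [NonUnitalCStarAlgebra A] (E : Corr A A) : Set A :=
  {a : A | E.lmul a ∈ E.compacts ∧ ∀ b : A, E.lmul b = 0 → a * b = 0}

/-- The closed submodule `M · J` of `M` determined by a subset `J ⊆ B`. -/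
def smSet (M : Corr A B) (J : Set B) : Set M.X :=
  clspan {ξ : M.X | ∃ (m : M.X) (b : B), b ∈ J ∧ ξ = M.sm m b}

/-- A pair of operators on a correspondence which are adjoint to each other. -/
def IsAdjointPair (W : Corr A B) (T S : W.X →L[ℂ] W.X) : Prop :=
  ∀ ξ η : W.X, W.ip (T ξ) η = W.ip ξ (S η)

end Corr

/-- The condition `J_X · M ⊆ M · J_Y` on an `A–B` correspondence `M`,
relative to correspondences `X` over `A` and `Y` over `B`. -/
def KatsuraCompat {A B : Type u} [NonUnitalCStarAlgebra A] [NonUnitalCStarAlgebra B]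
    (E : Corr A A) (M : Corr A B) (F : Corr B B) : Prop :=
  ∀ a ∈ E.katsuraIdeal, ∀ m : M.X, M.la a m ∈ M.smSet F.katsuraIdeal

/-- An isomorphism of `A–B` correspondences. -/
structure CorrIso {A B : Type u} [NonUnitalCStarAlgebra A] [NonUnitalCStarAlgebra B]
    (E F : Corr A B) where
  toFun : E.X → F.X
  invFun : F.X → E.X
  left_inv : Function.LeftInverse invFun toFun
  right_inv : Function.RightInverse invFun toFun
  map_add : ∀ x y : E.X, toFun (x + y) = toFun x + toFun y
  map_smul : ∀ (c : ℂ) (x : E.X), toFun (c • x) = c • toFun x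
  map_la : ∀ (a : A) (x : E.X), toFun (E.la a x) = F.la a (toFun x)
  map_ip : ∀ x y : E.X, F.ip (toFun x) (toFun y) = E.ip x y

/-- Witness that the correspondence `T` *is* the balanced tensor product `E ⊗_B F`,
via the bilinear map `mk2 : (x, y) ↦ x ⊗ y`. -/
structure TensorData {A B C : Type u} [NonUnitalCStarAlgebra A] [NonUnitalCStarAlgebra B]
    [NonUnitalCStarAlgebra C] (E : Corr A B) (F : Corr B C) (T : Corr A C) where
  mk2 : E.X → F.X → T.X
  add_l : ∀ (x x' : E.X) (y : F.X), mk2 (x + x') y = mk2 x y + mk2 x' y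
  add_r : ∀ (x : E.X) (y y' : F.X), mk2 x (y + y') = mk2 x y + mk2 x y'
  smul_l : ∀ (c : ℂ) (x : E.X) (y : F.X), mk2 (c • x) y = c • mk2 x y
  smul_r : ∀ (c : ℂ) (x : E.X) (y : F.X), mk2 x (c • y) = c • mk2 x y
  balanced : ∀ (x : E.X) (b : B) (y : F.X), mk2 (E.sm x b) y = mk2 x (F.la b y)
  ip_mk : ∀ (x x' : E.X) (y y' : F.X),
    T.ip (mk2 x y) (mk2 x' y') = F.ip y (F.la (E.ip x x') y')
  la_mk : ∀ (a : A) (x : E.X) (y : F.X), T.la a (mk2 x y) = mk2 (E.la a x) y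
  sm_mk : ∀ (x : E.X) (y : F.X) (c : C), T.sm (mk2 x y) c = mk2 x (F.sm y c)
  dense : clspan (Set.range fun p : E.X × F.X => mk2 p.1 p.2) = Set.univ

/-- Witness that `C` is the `A–D` correspondence obtained from the C*-algebra `D`
by letting `A` act on the left through the map `ψ : A → D` (e.g. the identity
correspondence when `D = A` and `ψ = id`). -/
structure PullCorr {A D : Type u} [NonUnitalCStarAlgebra A] [NonUnitalCStarAlgebra D]
    (ψ : A → D) (C : Corr A D) where
  u : D → C.X
  bij : Function.Bijective u
  add : ∀ d d' : D, u (d + d') = u d + u d'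
  smul : ∀ (c : ℂ) (d : D), u (c • d) = c • u d
  ip : ∀ d d' : D, C.ip (u d) (u d') = star d * d'
  la : ∀ (a : A) (d : D), C.la a (u d) = u (ψ a * d)
  sm : ∀ d d' : D, C.sm (u d) d' = u (d * d')

/-- Witness that `W'` is the `C–D` correspondence obtained from the `B–D` correspondence `W`
by transferring the left action along a homomorphism `σ : C → L(W)`. -/
structure ReCorr {B C D : Type u} [NonUnitalCStarAlgebra B] [NonUnitalCStarAlgebra C]
    [NonUnitalCStarAlgebra D] (W : Corr B D) (σ : C → (W.X →L[ℂ] W.X)) (W' : Corr C D) where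
  w : W.X → W'.X
  bij : Function.Bijective w
  add : ∀ ξ η : W.X, w (ξ + η) = w ξ + w η
  smul : ∀ (c : ℂ) (ξ : W.X), w (c • ξ) = c • w ξ
  ip_eq : ∀ ξ η : W.X, W'.ip (w ξ) (w η) = W.ip ξ η
  sm_eq : ∀ (ξ : W.X) (d : D), w (W.sm ξ d) = W'.sm (w ξ) d
  la_eq : ∀ (c : C) (ξ : W.X), W'.la c (w ξ) = w (σ c ξ)

/-- The structure of an `A–B` imprimitivity bimodule on an `A–B` correspondence `M`:
a compatible left `A`-valued inner product, full on both sides. -/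
structure ImpData {A B : Type u} [NonUnitalCStarAlgebra A] [NonUnitalCStarAlgebra B]
    (M : Corr A B) where
  lip : M.X → M.X → A
  lip_add : ∀ x y z : M.X, lip (x + y) z = lip x z + lip y z
  lip_smul : ∀ (c : ℂ) (x y : M.X), lip (c • x) y = c • lip x y
  lip_star : ∀ x y : M.X, star (lip x y) = lip y x
  lip_la : ∀ (a : A) (x y : M.X), lip (M.la a x) y = a * lip x y
  lip_pos : ∀ x : M.X, ∃ a : A, lip x x = star a * a
  compat : ∀ x y z : M.X, M.la (lip x y) z = M.sm x (M.ip y z)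
  full_left : clspan {a : A | ∃ x y : M.X, a = lip x y} = Set.univ
  full_right : clspan {b : B | ∃ x y : M.X, b = M.ip x y} = Set.univ

/-- Witness that the `B–A` correspondence `N` is the dual (conjugate) imprimitivity bimodule
of the `A–B` imprimitivity bimodule `M`. -/
structure DualData {A B : Type u} [NonUnitalCStarAlgebra A] [NonUnitalCStarAlgebra B]
    (M : Corr A B) (imp : ImpData M) (N : Corr B A) where
  d : M.X → N.X
  bij : Function.Bijective d
  add : ∀ x y : M.X, d (x + y) = d x + d y
  conj_smul : ∀ (c : ℂ) (x : M.X), d (c • x) = (starRingEnd ℂ c) • d x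
  la_eq : ∀ (b : B) (x : M.X), N.la b (d x) = d (M.sm x (star b))
  sm_eq : ∀ (x : M.X) (a : A), N.sm (d x) a = d (M.la (star a) x)
  ip_eq : ∀ x y : M.X, N.ip (d x) (d y) = imp.lip x y

/-- Witness that `X` (a correspondence over `A`) is a nondegenerate subcorrespondence of
`Y` (a correspondence over `B`), via `(φ̇, ϕ)`. -/
structure SubCorr {A B : Type u} [NonUnitalCStarAlgebra A] [NonUnitalCStarAlgebra B]
    (E : Corr A A) (F : Corr B B) where
  φd : E.X → F.X
  φd_inj : Function.Injective φd
  φd_add : ∀ x y : E.X, φd (x + y) = φd x + φd y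
  φd_smul : ∀ (c : ℂ) (x : E.X), φd (c • x) = c • φd x
  ϕ : A → B
  ϕ_inj : Function.Injective ϕ
  ϕ_add : ∀ a b : A, ϕ (a + b) = ϕ a + ϕ b
  ϕ_mul : ∀ a b : A, ϕ (a * b) = ϕ a * ϕ b
  ϕ_star : ∀ a : A, ϕ (star a) = star (ϕ a)
  ϕ_smul : ∀ (c : ℂ) (a : A), ϕ (c • a) = c • ϕ a
  ϕ_nondeg : clspan {b : B | ∃ (a : A) (c : B), b = ϕ a * c} = Set.univ
  la_eq : ∀ (a : A) (x : E.X), φd (E.la a x) = F.la (ϕ a) (φd x)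
  ip_eq : ∀ x y : E.X, F.ip (φd x) (φd y) = ϕ (E.ip x y)
  dense : clspan {y : F.X | ∃ (x : E.X) (b : B), y = F.sm (φd x) b} = Set.univ

/-- A representation `(π, t)` of a correspondence `X` over `A` on a C*-algebra `D`. -/
structure CorrRep {A : Type u} [NonUnitalCStarAlgebra A] (E : Corr A A)
    (D : Type u) [NonUnitalCStarAlgebra D] where
  π : A → D
  t : E.X → D
  π_add : ∀ a b : A, π (a + b) = π a + π b
  π_mul : ∀ a b : A, π (a * b) = π a * π b
  π_star : ∀ a : A, π (star a) = star (π a)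
  π_smul : ∀ (c : ℂ) (a : A), π (c • a) = c • π a
  t_add : ∀ x y : E.X, t (x + y) = t x + t y
  t_smul : ∀ (c : ℂ) (x : E.X), t (c • x) = c • t x
  mul_t : ∀ (a : A) (x : E.X), π a * t x = t (E.la a x)
  t_mul : ∀ x y : E.X, star (t x) * t y = π (E.ip x y)

/-- Covariance of a representation on the Katsura ideal:
`π(a) = Ψ_t(φ_X(a))` for `a ∈ J_X`, expressed by simultaneous approximation of
`φ_X(a)` by finite-rank operators and of `π(a)` by the corresponding finite sums. -/
def CorrRep.Covariant {A : Type u} [NonUnitalCStarAlgebra A] {E : Corr A A}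
    {D : Type u} [NonUnitalCStarAlgebra D] (R : CorrRep E D) : Prop :=
  ∀ a ∈ E.katsuraIdeal, ∀ ε > (0 : ℝ), ∃ (k : ℕ) (x y : Fin k → E.X),
    ‖E.lmul a - ∑ i, E.rankOne (x i) (y i)‖ < ε ∧
    ‖R.π a - ∑ i, R.t (x i) * star (R.t (y i))‖ < ε

/-- The products `t(x₁)⋯t(xₙ)`, i.e. `t^n` applied to elementary tensors. -/
def CorrRep.tProd {A : Type u} [NonUnitalCStarAlgebra A] {E : Corr A A}
    {D : Type u} [NonUnitalCStarAlgebra D] (R : CorrRep E D) :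
    (n : ℕ) → (Fin (n + 1) → E.X) → D
  | 0, x => R.t (x 0)
  | (k + 1), x => R.t (x 0) * R.tProd k (fun i => x i.succ)

/-- A Cuntz–Pimsner algebra for `X`: a C*-algebra `O` with a universal injective covariant
representation of `X`, generated by the image of that representation. -/
structure CuntzPimsner {A : Type u} [NonUnitalCStarAlgebra A] (E : Corr A A) :
    Type (u + 1) where
  O : Type u
  [str : NonUnitalCStarAlgebra O]
  rep : CorrRep E O
  covariant : rep.Covariant
  injective : Function.Injective rep.π
  generates :
    Dense ((NonUnitalStarAlgebra.adjoin ℂ (Set.range rep.π ∪ Set.range rep.t) :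
      NonUnitalStarSubalgebra ℂ O) : Set O)
  universal : ∀ (D : Type u) [NonUnitalCStarAlgebra D] (R : CorrRep E D), R.Covariant →
    ∃ ρ : O → D, Continuous ρ ∧
      (∀ p q : O, ρ (p + q) = ρ p + ρ q) ∧
      (∀ (c : ℂ) (p : O), ρ (c • p) = c • ρ p) ∧
      (∀ p q : O, ρ (p * q) = ρ p * ρ q) ∧
      (∀ p : O, ρ (star p) = star (ρ p)) ∧
      (∀ a : A, ρ (rep.π a) = R.π a) ∧
      (∀ x : E.X, ρ (rep.t x) = R.t x)

attribute [instance] CuntzPimsner.str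

/-- The gauge action of the circle on a Cuntz–Pimsner algebra. -/
structure GaugeAction {A : Type u} [NonUnitalCStarAlgebra A] {E : Corr A A}
    (CP : CuntzPimsner E) where
  g : ℂ → CP.O → CP.O
  g_add : ∀ z : ℂ, ‖z‖ = 1 → ∀ S T : CP.O, g z (S + T) = g z S + g z T
  g_smul : ∀ z : ℂ, ‖z‖ = 1 → ∀ (c : ℂ) (S : CP.O), g z (c • S) = c • g z S
  g_mul : ∀ z : ℂ, ‖z‖ = 1 → ∀ S T : CP.O, g z (S * T) = g z S * g z T
  g_star : ∀ z : ℂ, ‖z‖ = 1 → ∀ S : CP.O, g z (star S) = star (g z S)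
  g_comp : ∀ z w : ℂ, ‖z‖ = 1 → ‖w‖ = 1 → ∀ S : CP.O, g (z * w) S = g z (g w S)
  g_one : ∀ S : CP.O, g 1 S = S
  g_cont : ∀ S : CP.O, Continuous fun z : {z : ℂ // ‖z‖ = 1} => g z.1 S
  g_π : ∀ z : ℂ, ‖z‖ = 1 → ∀ a : A, g z (CP.rep.π a) = CP.rep.π a
  g_t : ∀ z : ℂ, ‖z‖ = 1 → ∀ x : E.X, g z (CP.rep.t x) = z • CP.rep.t x

/-- The data of a morphism `X → Y` in the category `ECCor`: a regular `A–B` correspondence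
`M` with `J_X · M ⊆ M · J_Y`, together with a correspondence isomorphism
`U : X ⊗_A M → M ⊗_B Y`. -/
structure EMor {A B : Type u} [NonUnitalCStarAlgebra A] [NonUnitalCStarAlgebra B]
    (E : Corr A A) (F : Corr B B) : Type (u + 1) where
  M : Corr A B
  regular : M.Regular
  kat : KatsuraCompat E M F
  TXM : Corr A B
  tdXM : TensorData E M TXM
  TMY : Corr A B
  tdMY : TensorData M F TMY
  U : CorrIso TXM TMY

/-- Two morphism data `(M, U_M)` and `(M', U_{M'})` are isomorphic:
there is an isomorphism `ξ : M → M'` with `U_{M'} ∘ (1_X ⊗ ξ) = (ξ ⊗ 1_Y) ∘ U_M`. -/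
def EMorEquiv {A B : Type u} [NonUnitalCStarAlgebra A] [NonUnitalCStarAlgebra B]
    {E : Corr A A} {F : Corr B B} (m m' : EMor E F) : Prop :=
  ∃ ξ : CorrIso m.M m'.M,
  ∃ Ξ : m.TMY.X → m'.TMY.X,
    (∀ ζ η, Ξ (ζ + η) = Ξ ζ + Ξ η) ∧
    (∀ (c : ℂ) ζ, Ξ (c • ζ) = c • Ξ ζ) ∧
    Continuous Ξ ∧
    (∀ (mm : m.M.X) (y : F.X), Ξ (m.tdMY.mk2 mm y) = m'.tdMY.mk2 (ξ.toFun mm) y) ∧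
    (∀ (x : E.X) (mm : m.M.X),
      m'.U.toFun (m'.tdXM.mk2 x (ξ.toFun mm)) = Ξ (m.U.toFun (m.tdXM.mk2 x mm)))

/-- `p` is a composite of `m : X → Y` and `n : Y → Z` in `ECCor`:
`p.M = M ⊗_B N` and `U_P = (1_M ⊗ U_N)(U_M ⊗ 1_N)` modulo the canonical identifications. -/
def EIsComposite {A B C : Type u} [NonUnitalCStarAlgebra A] [NonUnitalCStarAlgebra B]
    [NonUnitalCStarAlgebra C] {E : Corr A A} {F : Corr B B} {G : Corr C C}
    (m : EMor E F) (n : EMor F G) (p : EMor E G) : Prop :=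
  ∃ td : TensorData m.M n.M p.M,
  ∃ Ξ : m.M.X → n.TMY.X → p.TMY.X,       -- m ⊗ (n ⊗ z) ↦ (m ⊗ n) ⊗ z
  ∃ Θ : m.TMY.X → n.M.X → p.TMY.X,       -- (m ⊗ y) ⊗ n ↦ m ⊗ U_N(y ⊗ n)
    (∀ mm : m.M.X, (∀ ζ η, Ξ mm (ζ + η) = Ξ mm ζ + Ξ mm η) ∧
      (∀ (c : ℂ) ζ, Ξ mm (c • ζ) = c • Ξ mm ζ) ∧ Continuous (Ξ mm)) ∧
    (∀ (mm : m.M.X) (nn : n.M.X) (z : G.X),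
      Ξ mm (n.tdMY.mk2 nn z) = p.tdMY.mk2 (td.mk2 mm nn) z) ∧
    (∀ nn : n.M.X, (∀ ζ η, Θ (ζ + η) nn = Θ ζ nn + Θ η nn) ∧
      (∀ (c : ℂ) ζ, Θ (c • ζ) nn = c • Θ ζ nn) ∧ Continuous (fun ζ => Θ ζ nn)) ∧
    (∀ (mm : m.M.X) (y : F.X) (nn : n.M.X),
      Θ (m.tdMY.mk2 mm y) nn = Ξ mm (n.U.toFun (n.tdXM.mk2 y nn))) ∧
    (∀ (x : E.X) (mm : m.M.X) (nn : n.M.X),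
      p.U.toFun (p.tdXM.mk2 x (td.mk2 mm nn)) = Θ (m.U.toFun (m.tdXM.mk2 x mm)) nn)

/-- `e` is an identity morphism on `X` in `ECCor`: `e.M` is the identity correspondence `A`
and `U_A = i_l⁻¹ ∘ i_r : X ⊗_A A → A ⊗_A X`, i.e. `i_l (U_A (x ⊗ a)) = x · a`. -/
def EIsIdentity {A : Type u} [NonUnitalCStarAlgebra A] {E : Corr A A}
    (e : EMor E E) : Prop :=
  ∃ idd : PullCorr (fun a : A => a) e.M,
  ∃ il : e.TMY.X → E.X,
    (∀ ζ η, il (ζ + η) = il ζ + il η) ∧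
    (∀ (c : ℂ) ζ, il (c • ζ) = c • il ζ) ∧
    Continuous il ∧
    Function.Injective il ∧
    (∀ (a : A) (x : E.X), il (e.tdMY.mk2 (idd.u a) x) = E.la a x) ∧
    (∀ (x : E.X) (a : A), il (e.U.toFun (e.tdXM.mk2 x (idd.u a))) = E.sm x a)

/-- A morphism in `ECCor` is an isomorphism: it has a two-sided inverse up to
isomorphism of morphism data. -/
def EIsEIso {A B : Type u} [NonUnitalCStarAlgebra A] [NonUnitalCStarAlgebra B]
    {E : Corr A A} {F : Corr B B} (m : EMor E F) : Prop :=
  ∃ (n : EMor F E) (p : EMor E E) (q : EMor F F) (e : EMor E E) (f : EMor F F),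
    EIsComposite m n p ∧ EIsIdentity e ∧ EMorEquiv p e ∧
    EIsComposite n m q ∧ EIsIdentity f ∧ EMorEquiv q f

/-- The standing data for the C-covariant representation of `X` on `K(M ⊗_B O_Y)`
associated with a morphism `[M, U_M] : X → Y` in `ECCor`:  `O_Y` regarded as a
`B–O_Y` correspondence, the tensor product `W = M ⊗_B O_Y`, the canonical map
`Λ : (M ⊗_B Y) × O_Y → W`, `(m ⊗ y, S) ↦ m ⊗ t_Y(y)S`, and the operators
`Φ(x) = (1_M ⊗ V_Y)(T(x) ⊗ 1_{O_Y})`. -/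
structure CCovSetup {A B : Type u} [NonUnitalCStarAlgebra A] [NonUnitalCStarAlgebra B]
    {E : Corr A A} {F : Corr B B} (m : EMor E F) (CPY : CuntzPimsner F) :
    Type (u + 1) where
  OYc : Corr B CPY.O
  pcY : PullCorr CPY.rep.π OYc
  W : Corr A CPY.O
  tdW : TensorData m.M OYc W
  Λ : m.TMY.X → CPY.O → W.X
  Λ_add : ∀ (S : CPY.O) (ζ η : m.TMY.X), Λ (ζ + η) S = Λ ζ S + Λ η S
  Λ_smul : ∀ (S : CPY.O) (c : ℂ) (ζ : m.TMY.X), Λ (c • ζ) S = c • Λ ζ S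
  Λ_cont : ∀ S : CPY.O, Continuous fun ζ => Λ ζ S
  Λ_mk : ∀ (mm : m.M.X) (y : F.X) (S : CPY.O),
    Λ (m.tdMY.mk2 mm y) S = tdW.mk2 mm (pcY.u (CPY.rep.t y * S))
  Φ : E.X → (W.X →L[ℂ] W.X)
  Φ_mk : ∀ (x : E.X) (mm : m.M.X) (S : CPY.O),
    Φ x (tdW.mk2 mm (pcY.u S)) = Λ (m.U.toFun (m.tdXM.mk2 x mm)) S

/-- The homomorphism `σ : O_X → K(M ⊗_B O_Y) ⊆ L(M ⊗_B O_Y)` induced by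
the C-covariant representation. -/
structure SigmaData {A B : Type u} [NonUnitalCStarAlgebra A] [NonUnitalCStarAlgebra B]
    {E : Corr A A} {F : Corr B B} {m : EMor E F} {CPY : CuntzPimsner F}
    (st : CCovSetup m CPY) (CPX : CuntzPimsner E) where
  σ : CPX.O → (st.W.X →L[ℂ] st.W.X)
  σ_add : ∀ S T : CPX.O, σ (S + T) = σ S + σ T
  σ_smul : ∀ (c : ℂ) (S : CPX.O), σ (c • S) = c • σ S
  σ_mul : ∀ S T : CPX.O, σ (S * T) = (σ S).comp (σ T)
  σ_star : ∀ S : CPX.O, st.W.IsAdjointPair (σ S) (σ (star S))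
  σ_cont : Continuous σ
  σ_t : ∀ x : E.X, σ (CPX.rep.t x) = st.Φ x
  σ_π : ∀ a : A, σ (CPX.rep.π a) = st.W.lmul a

/-- A bundled C*-correspondence over a C*-algebra. -/
structure BCorr : Type (u + 1) where
  alg : Type u
  [str : NonUnitalCStarAlgebra alg]
  cor : Corr alg alg

attribute [instance] BCorr.str

/-- Elementary strong shift equivalence through *regular* correspondences `R`, `S`:
`X ≅ R ⊗_B S` and `Y ≅ S ⊗_A R`. -/
def ElemSSERegular (E F : BCorr) : Prop :=
  ∃ (R : Corr E.alg F.alg) (S : Corr F.alg E.alg)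
    (T₁ : Corr E.alg E.alg) (_ : TensorData R S T₁)
    (T₂ : Corr F.alg F.alg) (_ : TensorData S R T₂),
    R.Regular ∧ S.Regular ∧ Nonempty (CorrIso T₁ E.cor) ∧ Nonempty (CorrIso T₂ F.cor)

/-- Strong shift equivalence (with all intermediate data regular). -/
def StrongSSERegular (E F : BCorr) : Prop :=
  ∃ (n : ℕ) (Z : Fin (n + 1) → BCorr),
    Z 0 = E ∧ Z (Fin.last n) = F ∧
    (∀ i, (Z i).cor.Regular) ∧
    ∀ i : Fin n, ElemSSERegular (Z i.castSucc) (Z i.succ)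

/-- The tower of tensor powers `X^{⊗ k}` of a correspondence `X` over `A`
(with `X^{⊗ 0} = A`), together with the "append on the right" maps
`X^{⊗ k} × X → X^{⊗ (k+1)}`. -/
structure PowerTower {A : Type u} [NonUnitalCStarAlgebra A] (E : Corr A A) :
    Type (u + 1) where
  P : ℕ → Corr A A
  zero : PullCorr (fun a : A => a) (P 0)
  step : ∀ k : ℕ, TensorData E (P k) (P (k + 1))
  app : ∀ k : ℕ, (P k).X → E.X → (P (k + 1)).X
  app_add : ∀ (k : ℕ) (y : E.X) (w w' : (P k).X), app k (w + w') y = app k w y + app k w' y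
  app_smul : ∀ (k : ℕ) (y : E.X) (c : ℂ) (w : (P k).X), app k (c • w) y = c • app k w y
  app_cont : ∀ (k : ℕ) (y : E.X), Continuous fun w => app k w y
  app_base : ∀ (a : A) (y : E.X) (b : A),
    (P 1).sm (app 0 (zero.u a) y) b = (step 0).mk2 (E.la a y) (zero.u b)
  app_step : ∀ (k : ℕ) (x : E.X) (w : (P k).X) (y : E.X),
    app (k + 1) ((step k).mk2 x w) y = (step (k + 1)).mk2 x (app k w y)

end

noncomputable section

universe u

noncomputable section

/-- Extension lemma -/
lemma clspan_ext {V O : Type*} [AddCommMonoid V] [Module ℂ V] [TopologicalSpace V]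
    [AddCommMonoid O] [Module ℂ O] [TopologicalSpace O] [T2Space O]
    {s : Set V} (hs : clspan s = Set.univ) {f g : V → O}
    (hfa : ∀ x y, f (x + y) = f x + f y) (hfs : ∀ (c : ℂ) x, f (c • x) = c • f x)
    (hfc : Continuous f)
    (hga : ∀ x y, g (x + y) = g x + g y) (hgs : ∀ (c : ℂ) x, g (c • x) = c • g x)
    (hgc : Continuous g)
    (h : ∀ x ∈ s, f x = g x) : ∀ x, f x = g x := by
  have hspan : ∀ y ∈ Submodule.span ℂ s, f y = g y := by
    intro y hy
    induction hy using Submodule.span_induction with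
    | mem z hz => exact h z hz
    | zero =>
        have hf0 : f 0 = 0 := by simpa using hfs 0 0
        have hg0 : g 0 = 0 := by simpa using hgs 0 0
        rw [hf0, hg0]
    | add a b _ _ ha hb => rw [hfa, hga, ha, hb]
    | smul c a _ ha => rw [hfs, hgs, ha]
  have hcl : IsClosed {y : V | f y = g y} := isClosed_eq hfc hgc
  intro x
  have hx : x ∈ clspan s := by rw [hs]; trivial
  exact closure_minimal (fun y hy => hspan y hy) hcl hx

variable {A : Type u} [NonUnitalCStarAlgebra A] {E : Corr A A}
variable {D : Type u} [NonUnitalCStarAlgebra D]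

/-- The coefficient map of a representation is norm-contractive. -/
lemma CorrRep.π_norm_le (R : CorrRep E D) (a : A) : ‖R.π a‖ ≤ ‖a‖ := by
  let φ : A →⋆ₙₐ[ℂ] D :=
    { toFun := R.π
      map_smul' := fun c b => R.π_smul c b
      map_zero' := by simpa using R.π_smul 0 0
      map_add' := R.π_add
      map_mul' := R.π_mul
      map_star' := R.π_star }
  exact NonUnitalStarAlgHom.norm_apply_le φ a

lemma CorrRep.t_norm_le (R : CorrRep E D) (x : E.X) : ‖R.t x‖ ≤ ‖x‖ := by
  have h2 : ‖R.t x‖ * ‖R.t x‖ = ‖R.π (E.ip x x)‖ := by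
    rw [← CStarRing.norm_star_mul_self, R.t_mul]
  have h3 : ‖R.π (E.ip x x)‖ ≤ ‖x‖ * ‖x‖ := by
    calc ‖R.π (E.ip x x)‖ ≤ ‖E.ip x x‖ := R.π_norm_le _
      _ = ‖x‖ ^ 2 := (E.ip_norm x).symm
      _ = ‖x‖ * ‖x‖ := sq ‖x‖
  nlinarith [norm_nonneg (R.t x), norm_nonneg x]

lemma CorrRep.t_cont (R : CorrRep E D) : Continuous R.t := by
  let lt : E.X →ₗ[ℂ] D :=
    { toFun := R.t
      map_add' := R.t_add
      map_smul' := R.t_smul }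
  exact (lt.mkContinuous 1 (fun x => by show ‖R.t x‖ ≤ 1 * ‖x‖; simpa using R.t_norm_le x)).continuous

lemma Corr.ip_sm_left (E : Corr A A) (x y : E.X) (a : A) :
    E.ip (E.sm x a) y = star a * E.ip x y := by
  have h2 := E.ip_star y (E.sm x a)
  rw [← h2, E.ip_sm, star_mul, E.ip_star]

/-- `t(x · a) = t(x) π(a)` in any representation. -/
lemma CorrRep.t_sm (R : CorrRep E D) (x : E.X) (a : A) :
    R.t (E.sm x a) = R.t x * R.π a := by
  set u := R.t (E.sm x a) with hu
  set v := R.t x * R.π a with hv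
  have hstv : star v = R.π (star a) * star (R.t x) := by
    rw [hv, star_mul, ← R.π_star]
  have h1 : star u * u = R.π (star a * (E.ip x x * a)) := by
    rw [hu, R.t_mul, E.ip_sm_left, E.ip_sm]
  have h2 : star u * v = R.π (star a * (E.ip x x * a)) := by
    rw [hu, hv, ← mul_assoc, R.t_mul, E.ip_sm_left, ← R.π_mul, mul_assoc]
  have h3 : star v * u = R.π (star a * (E.ip x x * a)) := by
    rw [hstv, hu, mul_assoc, R.t_mul, E.ip_sm, ← R.π_mul]
  have h4 : star v * v = R.π (star a * (E.ip x x * a)) := by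
    rw [hstv, hv, mul_assoc, ← mul_assoc (star (R.t x)), R.t_mul, ← R.π_mul, ← R.π_mul]
  have key : star (u - v) * (u - v) = 0 := by
    rw [star_sub, sub_mul, mul_sub, mul_sub, h1, h2, h3, h4]
    simp
  have hnorm : ‖u - v‖ * ‖u - v‖ = 0 := by
    rw [← CStarRing.norm_star_mul_self, key, norm_zero]
  have hd : u - v = 0 := norm_eq_zero.mp (mul_self_eq_zero.mp hnorm)
  exact sub_eq_zero.mp hd

end

/-- Let `(π, Φ)` be the C-covariant representation of `X` associated with
the identity morphism `[A, U_A] : X → X` in `ECCor`, and let `σ : O_X → K(A ⊗_A O_X)` be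
the induced homomorphism.  Then the `A–O_X` correspondence isomorphism
`U : A ⊗_A O_X → O_X`, `a ⊗ S ↦ Υ(a)S`, satisfies `U(σ(T)ξ) = T · U(ξ)` for all
`T ∈ O_X`, `ξ ∈ A ⊗_A O_X`; that is, `A ⊗_A O_X ≅ O_X` as `O_X–O_X` correspondences. -/
theorem identity_morphism_gives_identity_correspondence
    (A : Type u) [NonUnitalCStarAlgebra A] (E : Corr A A)
    (CP : CuntzPimsner E)
    (e : EMor E E)
    -- e is the identity morphism [A, U_A]
    (idd : PullCorr (fun a : A => a) e.M)
    (il : e.TMY.X → E.X)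
    (il_add : ∀ ζ η, il (ζ + η) = il ζ + il η)
    (il_smul : ∀ (c : ℂ) ζ, il (c • ζ) = c • il ζ)
    (il_cont : Continuous il)
    (il_inj : Function.Injective il)
    (il_mk : ∀ (a : A) (x : E.X), il (e.tdMY.mk2 (idd.u a) x) = E.la a x)
    (hUA : ∀ (x : E.X) (a : A), il (e.U.toFun (e.tdXM.mk2 x (idd.u a))) = E.sm x a)
    -- the C-covariant representation of X on K(A ⊗_A O_X) and the induced σ
    (st : CCovSetup e CP) (sd : SigmaData st CP)
    -- the canonical isomorphism U : A ⊗_A O_X → O_X, a ⊗ S ↦ Υ(a)S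
    (U : st.W.X → CP.O)
    (U_bij : Function.Bijective U)
    (U_add : ∀ ζ η, U (ζ + η) = U ζ + U η)
    (U_smul : ∀ (c : ℂ) ζ, U (c • ζ) = c • U ζ)
    (U_cont : Continuous U)
    (U_ip : ∀ ζ η, star (U ζ) * U η = st.W.ip ζ η)
    (U_sm : ∀ (ζ : st.W.X) (S : CP.O), U (st.W.sm ζ S) = U ζ * S)
    (U_mk : ∀ (a : A) (S : CP.O), U (st.tdW.mk2 (idd.u a) (st.pcY.u S)) = CP.rep.π a * S) :
    ∀ (T : CP.O) (ζ : st.W.X), U (sd.σ T ζ) = T * U ζ := by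
  -- π case
  have hπB : ∀ (a : A) (ζ : st.W.X), U (st.W.lmul a ζ) = CP.rep.π a * U ζ := by
    intro a
    refine clspan_ext (f := fun ζ => U (st.W.lmul a ζ)) (g := fun ζ => CP.rep.π a * U ζ)
      st.tdW.dense
      (fun ζ η => by beta_reduce; rw [map_add, U_add])
      (fun c ζ => by beta_reduce; rw [map_smul, U_smul])
      (U_cont.comp (st.W.lmul a).continuous)
      (fun ζ η => by beta_reduce; rw [U_add, mul_add])
      (fun c ζ => by beta_reduce; rw [U_smul, mul_smul_comm])
      ((continuous_mul_left _).comp U_cont)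
      ?_
    rintro ζ ⟨⟨m, w⟩, rfl⟩
    obtain ⟨b, rfl⟩ := idd.bij.2 m
    obtain ⟨S, rfl⟩ := st.pcY.bij.2 w
    beta_reduce
    show U (st.W.la a (st.tdW.mk2 (idd.u b) (st.pcY.u S))) = _
    rw [st.tdW.la_mk, idd.la, U_mk, U_mk, CP.rep.π_mul, mul_assoc]
  -- Λ case
  have hil : ∀ (S : CP.O) (ζ' : e.TMY.X), U (st.Λ ζ' S) = CP.rep.t (il ζ') * S := by
    intro S
    refine clspan_ext (f := fun ζ' => U (st.Λ ζ' S)) (g := fun ζ' => CP.rep.t (il ζ') * S)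
      e.tdMY.dense
      (fun ζ η => by beta_reduce; rw [st.Λ_add, U_add])
      (fun c ζ => by beta_reduce; rw [st.Λ_smul, U_smul])
      (U_cont.comp (st.Λ_cont S))
      (fun ζ η => by beta_reduce; rw [il_add, CP.rep.t_add, add_mul])
      (fun c ζ => by beta_reduce; rw [il_smul, CP.rep.t_smul, smul_mul_assoc])
      ((continuous_mul_right S).comp (CP.rep.t_cont.comp il_cont))
      ?_
    rintro ζ ⟨⟨m, y⟩, rfl⟩
    obtain ⟨b, rfl⟩ := idd.bij.2 m
    beta_reduce
    rw [st.Λ_mk, U_mk, il_mk, ← CP.rep.mul_t, mul_assoc]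
  -- Φ case
  have hΦ : ∀ (x : E.X) (ζ : st.W.X), U (st.Φ x ζ) = CP.rep.t x * U ζ := by
    intro x
    refine clspan_ext (f := fun ζ => U (st.Φ x ζ)) (g := fun ζ => CP.rep.t x * U ζ)
      st.tdW.dense
      (fun ζ η => by beta_reduce; rw [map_add, U_add])
      (fun c ζ => by beta_reduce; rw [map_smul, U_smul])
      (U_cont.comp (st.Φ x).continuous)
      (fun ζ η => by beta_reduce; rw [U_add, mul_add])
      (fun c ζ => by beta_reduce; rw [U_smul, mul_smul_comm])
      ((continuous_mul_left _).comp U_cont)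
      ?_
    rintro ζ ⟨⟨m, w⟩, rfl⟩
    obtain ⟨a, rfl⟩ := idd.bij.2 m
    obtain ⟨S, rfl⟩ := st.pcY.bij.2 w
    beta_reduce
    rw [st.Φ_mk, hil, hUA, CP.rep.t_sm, U_mk, mul_assoc]
  have hU0 : U 0 = 0 := by simpa using U_smul 0 0
  -- the set where the conclusion holds contains the generated star subalgebra
  have hadj : ∀ T ∈ NonUnitalStarAlgebra.adjoin ℂ
      (Set.range CP.rep.π ∪ Set.range CP.rep.t), ∀ ζ, U (sd.σ T ζ) = T * U ζ := by
    intro T hT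
    induction hT using NonUnitalStarAlgebra.adjoin_induction with
    | mem x hx =>
        intro ζ
        rcases hx with ⟨a, rfl⟩ | ⟨y, rfl⟩
        · rw [sd.σ_π]; exact hπB a ζ
        · rw [sd.σ_t]; exact hΦ y ζ
    | add p q hp hq ihp ihq =>
        intro ζ
        rw [sd.σ_add, ContinuousLinearMap.add_apply, U_add, ihp, ihq, add_mul]
    | zero =>
        intro ζ
        have hσ0 : sd.σ 0 = 0 := by simpa using sd.σ_smul 0 0
        rw [hσ0, ContinuousLinearMap.zero_apply, hU0, zero_mul]
    | mul p q hp hq ihp ihq =>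
        intro ζ
        rw [sd.σ_mul, ContinuousLinearMap.comp_apply, ihp, ihq, mul_assoc]
    | smul c p hp ihp =>
        intro ζ
        rw [sd.σ_smul, ContinuousLinearMap.smul_apply, U_smul, ihp, smul_mul_assoc]
    | star p hp ihp =>
        intro ζ
        have hzero : ∀ η : st.W.X,
            star (U η) * (U (sd.σ (star p) ζ) - star p * U ζ) = 0 := by
          intro η
          have key : star (U η) * U (sd.σ (star p) ζ) = star (U η) * (star p * U ζ) := by
            calc star (U η) * U (sd.σ (star p) ζ)
                = st.W.ip η (sd.σ (star p) ζ) := U_ip η _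
              _ = st.W.ip (sd.σ p η) ζ := (sd.σ_star p η ζ).symm
              _ = star (U (sd.σ p η)) * U ζ := (U_ip _ _).symm
              _ = star (p * U η) * U ζ := by rw [ihp]
              _ = star (U η) * (star p * U ζ) := by rw [star_mul, mul_assoc]
          rw [mul_sub, key, sub_self]
        obtain ⟨η, hη⟩ := U_bij.2 (U (sd.σ (star p) ζ) - star p * U ζ)
        have hsq := hzero η
        rw [hη] at hsq
        have hnorm : ‖U (sd.σ (star p) ζ) - star p * U ζ‖ *
            ‖U (sd.σ (star p) ζ) - star p * U ζ‖ = 0 := by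
          rw [← CStarRing.norm_star_mul_self, hsq, norm_zero]
        have := norm_eq_zero.mp (mul_self_eq_zero.mp hnorm)
        exact sub_eq_zero.mp this
  -- closedness and density
  have hclosed : IsClosed {T : CP.O | ∀ ζ, U (sd.σ T ζ) = T * U ζ} := by
    have heq : {T : CP.O | ∀ ζ, U (sd.σ T ζ) = T * U ζ}
        = ⋂ ζ, {T | U (sd.σ T ζ) = T * U ζ} := by
      ext T; simp [Set.mem_iInter]
    rw [heq]
    refine isClosed_iInter fun ζ => isClosed_eq ?_ ?_
    · exact U_cont.comp ((ContinuousLinearMap.apply ℂ st.W.X ζ).continuous.comp sd.σ_cont)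
    · exact continuous_mul_right _
  intro T
  have hTmem : T ∈ closure ((NonUnitalStarAlgebra.adjoin ℂ
      (Set.range CP.rep.π ∪ Set.range CP.rep.t) : NonUnitalStarSubalgebra ℂ CP.O) :
      Set CP.O) := by
    rw [CP.generates.closure_eq]; trivial
  exact closure_minimal (fun S hS => hadj S hS) hclosed hTmem


end
end

section
/- Let X (over A) be a nondegenerate subcorrespondence of Y (over B) via (φ̇, ϕ), and regard B as a regular A–B correspondence via ϕ. If J_X·B ⊆ J_Y, then [B, U_B] is a morphism from X to Y in ECCor, where U_B = j^{-1} ∘ ξ : X ⊗_A B → B ⊗_B Y, ξ is the correspondence isomorphism X ⊗_A B → Y determined by x ⊗ b ↦ φ̇(x)b, and j : B ⊗_B Y → Y is the canonical isomorphism b ⊗ y ↦ b·y. Moreover, the condition J_X·B ⊆ J_Y holds automatically whenever Y is injective. -/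
noncomputable section

universe u

namespace Corr

variable {A B C : Type u} [NonUnitalCStarAlgebra A] [NonUnitalCStarAlgebra B]
  [NonUnitalCStarAlgebra C]

variable (M : Corr A B)

@[simp] lemma lmul_apply (a : A) (x : M.X) : M.lmul a x = M.la a x := rfl

@[simp] lemma rankOne_apply (x y z : M.X) : M.rankOne x y z = M.sm x (M.ip y z) := rfl

lemma norm_rankOne_le (x y : M.X) : ‖M.rankOne x y‖ ≤ ‖x‖ * ‖y‖ :=
  LinearMap.mkContinuous_norm_le _ (by positivity) _

lemma ip_zero_right (x : M.X) : M.ip x 0 = 0 := by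
  simpa using M.ip_smul 0 x 0

lemma ip_zero_left (x : M.X) : M.ip 0 x = 0 := by
  rw [← M.ip_star, ip_zero_right, star_zero]

lemma ip_add_left (x y z : M.X) : M.ip (x + y) z = M.ip x z + M.ip y z := by
  rw [← M.ip_star, M.ip_add, star_add, M.ip_star, M.ip_star]

lemma ip_smul_left (c : ℂ) (x y : M.X) : M.ip (c • x) y = star c • M.ip x y := by
  rw [← M.ip_star, M.ip_smul, star_smul, M.ip_star]

lemma ip_neg_right (x y : M.X) : M.ip x (-y) = - M.ip x y := by
  simpa using M.ip_smul (-1) x y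

lemma ip_neg_left (x y : M.X) : M.ip (-x) y = - M.ip x y := by
  simpa using M.ip_smul_left (-1) x y

lemma ip_sub_right (x y z : M.X) : M.ip x (y - z) = M.ip x y - M.ip x z := by
  rw [sub_eq_add_neg, M.ip_add, ip_neg_right, sub_eq_add_neg]

lemma ip_sub_left (x y z : M.X) : M.ip (x - y) z = M.ip x z - M.ip y z := by
  rw [sub_eq_add_neg, M.ip_add_left, ip_neg_left, sub_eq_add_neg]

lemma ip_sm_left_s7 (x : M.X) (b : B) (y : M.X) :
    M.ip (M.sm x b) y = star b * M.ip x y := by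
  rw [← M.ip_star, M.ip_sm, star_mul, M.ip_star]

lemma sm_zero_right (x : M.X) : M.sm x 0 = 0 := by
  simpa using M.sm_smul' 0 x 0

lemma sm_zero_left (b : B) : M.sm 0 b = 0 := by
  simpa using M.sm_smul 0 0 b

lemma sm_sub_left (x y : M.X) (b : B) : M.sm (x - y) b = M.sm x b - M.sm y b := by
  have h : M.sm (-y) b = - M.sm y b := by simpa using M.sm_smul (-1) y b
  rw [sub_eq_add_neg, M.sm_add, h, sub_eq_add_neg]

lemma la_zero_right (a : A) : M.la a 0 = 0 := by
  simpa using M.la_smul a 0 0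

lemma la_zero_left (x : M.X) : M.la 0 x = 0 := by
  simpa using M.la_smul' 0 0 x

lemma norm_eq_norm_of_ip {M : Corr A B} {N : Corr C B} {x : M.X} {y : N.X}
    (h : M.ip x x = N.ip y y) : ‖x‖ = ‖y‖ := by
  have h2 : ‖x‖ ^ 2 = ‖y‖ ^ 2 := by rw [M.ip_norm, N.ip_norm, h]
  exact (sq_eq_sq₀ (norm_nonneg _) (norm_nonneg _)).mp h2

lemma eq_zero_of_ip_self_eq_zero {x : M.X} (h : M.ip x x = 0) : x = 0 := by
  have h2 : ‖x‖ ^ 2 = 0 := by rw [M.ip_norm, h, norm_zero]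
  have : ‖x‖ = 0 := by
    have := pow_eq_zero_iff (n := 2) (by norm_num) |>.mp h2
    exact this
  simpa using this

/-- The right action by a fixed `b`, as a continuous linear map. -/
def smL (b : B) : M.X →L[ℂ] M.X :=
  LinearMap.mkContinuous
    { toFun := fun x => M.sm x b
      map_add' := fun x y => M.sm_add x y b
      map_smul' := fun c x => M.sm_smul c x b } ‖b‖
    (fun x => by rw [mul_comm]; exact M.sm_bound x b)

@[simp] lemma smL_apply (b : B) (x : M.X) : M.smL b x = M.sm x b := rfl

/-- The inner product against a fixed vector, as a continuous linear map. -/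
def ipL (x : M.X) : M.X →L[ℂ] B :=
  LinearMap.mkContinuous
    { toFun := fun y => M.ip x y
      map_add' := fun y z => M.ip_add x y z
      map_smul' := fun c y => M.ip_smul c x y } ‖x‖
    (fun y => M.ip_bound x y)

@[simp] lemma ipL_apply (x y : M.X) : M.ipL x y = M.ip x y := rfl

lemma continuous_ip_right (x : M.X) : Continuous (fun y => M.ip x y) :=
  (M.ipL x).continuous

lemma continuous_ip_left (y : M.X) : Continuous (fun x => M.ip x y) := by
  have h : (fun x => M.ip x y) = fun x => star (M.ip y x) := by
    funext x; rw [M.ip_star]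
  rw [h]
  exact continuous_star.comp (M.continuous_ip_right y)

lemma ip_sum_right {ι : Type*} (s : Finset ι) (x : M.X) (f : ι → M.X) :
    M.ip x (∑ i ∈ s, f i) = ∑ i ∈ s, M.ip x (f i) :=
  map_sum (M.ipL x) f s

lemma ip_sum_left {ι : Type*} (s : Finset ι) (x : M.X) (f : ι → M.X) :
    M.ip (∑ i ∈ s, f i) x = ∑ i ∈ s, M.ip (f i) x := by
  rw [← M.ip_star, ip_sum_right, star_sum]
  exact Finset.sum_congr rfl fun i _ => M.ip_star x (f i)

lemma sm_sum_left {ι : Type*} (s : Finset ι) (b : B) (f : ι → M.X) :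
    M.sm (∑ i ∈ s, f i) b = ∑ i ∈ s, M.sm (f i) b :=
  map_sum (M.smL b) f s

end Corr
/-- Two continuous maps that agree on a generating set (compatibly with the linear
structure) and whose span is dense agree everywhere. -/
lemma eqOn_dense_span {V W : Type*} [NormedAddCommGroup V] [NormedSpace ℂ V]
    [TopologicalSpace W] [T2Space W] {s : Set V}
    (hd : closure ((Submodule.span ℂ s : Submodule ℂ V) : Set V) = Set.univ)
    {f g : V → W} (hf : Continuous f) (hg : Continuous g)
    (hmem : ∀ x ∈ s, f x = g x) (h0 : f 0 = g 0)
    (hadd : ∀ x y, f x = g x → f y = g y → f (x + y) = g (x + y))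
    (hsmul : ∀ (c : ℂ) (x), f x = g x → f (c • x) = g (c • x)) :
    ∀ x, f x = g x := by
  have hdense : Dense ((Submodule.span ℂ s : Submodule ℂ V) : Set V) :=
    dense_iff_closure_eq.mpr hd
  have heq : Set.EqOn f g ((Submodule.span ℂ s : Submodule ℂ V) : Set V) := by
    intro x hx
    exact Submodule.span_induction hmem h0 (fun a b _ _ ha hb => hadd a b ha hb)
      (fun c a _ ha => hsmul c a ha) hx
  have := Continuous.ext_on hdense hf hg heq
  exact fun x => congrFun this x

/-- Isometric extension of an inner-product preserving assignment on generators
whose span is dense. -/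
theorem Corr.extension {A B C : Type u} [NonUnitalCStarAlgebra A] [NonUnitalCStarAlgebra B]
    [NonUnitalCStarAlgebra C] {ι : Type u} (M : Corr A B) (N : Corr C B)
    (g : ι → M.X) (h : ι → N.X)
    (hip : ∀ i j, N.ip (h i) (h j) = M.ip (g i) (g j))
    (hdense : closure ((Submodule.span ℂ (Set.range g) : Submodule ℂ M.X) : Set M.X)
      = Set.univ) :
    ∃ Φ : M.X →L[ℂ] N.X, (∀ i, Φ (g i) = h i) ∧ (∀ x, ‖Φ x‖ = ‖x‖) ∧
      (∀ x y, N.ip (Φ x) (Φ y) = M.ip x y) := by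
  classical
  set l1 : (ι →₀ ℂ) →ₗ[ℂ] M.X := Finsupp.linearCombination ℂ g with hl1
  set l2 : (ι →₀ ℂ) →ₗ[ℂ] N.X := Finsupp.linearCombination ℂ h with hl2
  -- inner products agree on finite combinations
  have key1 : ∀ (i : ι) (t : ι →₀ ℂ), M.ip (g i) (l1 t) = N.ip (h i) (l2 t) := by
    intro i t
    induction t using Finsupp.induction_linear with
    | zero => simp [Corr.ip_zero_right]
    | add u v hu hv => simp [map_add, M.ip_add, N.ip_add, hu, hv]
    | single j c =>
      simp only [hl1, hl2, Finsupp.linearCombination_single, M.ip_smul, N.ip_smul, hip]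
  have key2 : ∀ (s t : ι →₀ ℂ), M.ip (l1 s) (l1 t) = N.ip (l2 s) (l2 t) := by
    intro s t
    induction s using Finsupp.induction_linear with
    | zero => simp [Corr.ip_zero_left]
    | add u v hu hv => simp [map_add, M.ip_add_left, N.ip_add_left, hu, hv]
    | single j c =>
      simp only [hl1, hl2, Finsupp.linearCombination_single, M.ip_smul_left,
        N.ip_smul_left, key1]
      exact congrArg _ (key1 j t)
  have keynorm : ∀ s : ι →₀ ℂ, ‖l2 s‖ = ‖l1 s‖ :=
    fun s => Corr.norm_eq_norm_of_ip (key2 s s).symm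
  set V : Submodule ℂ M.X := Submodule.span ℂ (Set.range g) with hV
  have hmemV : ∀ ζ : V, (ζ : M.X) ∈ LinearMap.range l1 := by
    intro ζ
    rw [hl1, Finsupp.range_linearCombination]
    exact ζ.2
  set rep : V → (ι →₀ ℂ) := fun ζ => (hmemV ζ).choose with hrep
  have hrepl1 : ∀ ζ : V, l1 (rep ζ) = (ζ : M.X) := fun ζ => (hmemV ζ).choose_spec
  have indep : ∀ (s : ι →₀ ℂ) (ζ : V), l1 s = (ζ : M.X) → l2 s = l2 (rep ζ) := by
    intro s ζ hs
    have h0 : l1 (s - rep ζ) = 0 := by rw [map_sub, hs, hrepl1, sub_self]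
    have h0' : ‖l2 (s - rep ζ)‖ = 0 := by rw [keynorm, h0, norm_zero]
    have := norm_eq_zero.mp h0'
    rw [map_sub] at this
    exact sub_eq_zero.mp this
  set jV : V →ₗ[ℂ] N.X :=
    { toFun := fun ζ => l2 (rep ζ)
      map_add' := by
        intro ζ η
        show l2 (rep (ζ + η)) = l2 (rep ζ) + l2 (rep η)
        have : l1 (rep ζ + rep η) = ((ζ + η : V) : M.X) := by
          rw [map_add, hrepl1, hrepl1]; rfl
        rw [← indep _ _ this, map_add]
      map_smul' := by
        intro c ζ
        show l2 (rep (c • ζ)) = c • l2 (rep ζ)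
        have : l1 (c • rep ζ) = ((c • ζ : V) : M.X) := by
          rw [map_smul, hrepl1]; rfl
        rw [← indep _ _ this, map_smul] } with hjV
  have jV_norm : ∀ ζ : V, ‖jV ζ‖ = ‖ζ‖ := by
    intro ζ
    show ‖l2 (rep ζ)‖ = ‖ζ‖
    rw [keynorm, hrepl1]
    rfl
  have jV_ip : ∀ ζ η : V, N.ip (jV ζ) (jV η) = M.ip (ζ : M.X) (η : M.X) := by
    intro ζ η
    show N.ip (l2 (rep ζ)) (l2 (rep η)) = _
    rw [← key2, hrepl1, hrepl1]
  set ΦV : V →L[ℂ] N.X := LinearMap.mkContinuous jV 1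
    (fun ζ => by rw [jV_norm, one_mul]) with hΦV
  have hΦVapp : ∀ ζ : V, ΦV ζ = jV ζ := fun ζ => rfl
  set e : V →L[ℂ] M.X := V.subtypeL with he
  have hde : DenseRange e := by
    have hr : Set.range (⇑e) = (V : Set M.X) := Subtype.range_coe
    rw [DenseRange, hr]
    exact dense_iff_closure_eq.mpr hdense
  have hue : IsUniformInducing (⇑e) := isometry_subtype_coe.isUniformInducing
  set Φ : M.X →L[ℂ] N.X := ΦV.extend e with hΦ
  have hΦapp : ∀ ζ : V, Φ (ζ : M.X) = jV ζ := by
    intro ζ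
    have := ContinuousLinearMap.extend_eq ΦV hde hue ζ
    exact this
  have hgen : ∀ i, Φ (g i) = h i := by
    intro i
    have hgmem : g i ∈ V := Submodule.subset_span (Set.mem_range_self i)
    have h1 : l1 (Finsupp.single i 1) = ((⟨g i, hgmem⟩ : V) : M.X) := by
      simp [hl1, Finsupp.linearCombination_single]
    have h2 : l2 (Finsupp.single i 1) = h i := by
      simp [hl2, Finsupp.linearCombination_single]
    rw [hΦapp ⟨g i, hgmem⟩]
    show l2 (rep ⟨g i, hgmem⟩) = h i
    rw [← indep _ _ h1, h2]
  have hdenseV : Dense (V : Set M.X) := dense_iff_closure_eq.mpr hdense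
  have hnorm : ∀ x, ‖Φ x‖ = ‖x‖ := by
    have heq : Set.EqOn (fun x => ‖Φ x‖) (fun x => ‖x‖) (V : Set M.X) := by
      intro x hx
      show ‖Φ x‖ = ‖x‖
      rw [show x = ((⟨x, hx⟩ : V) : M.X) from rfl, hΦapp, jV_norm]
      rfl
    have := Continuous.ext_on hdenseV (continuous_norm.comp Φ.continuous)
      continuous_norm heq
    exact fun x => congrFun this x
  have hipfix : ∀ (η : V) (x : M.X), N.ip (Φ x) (Φ (η : M.X)) = M.ip x (η : M.X) := by
    intro η
    have hc1 : Continuous fun x => N.ip (Φ x) (Φ (η : M.X)) :=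
      (N.continuous_ip_left _).comp Φ.continuous
    have hc2 : Continuous fun x => M.ip x (η : M.X) := M.continuous_ip_left _
    have heq : Set.EqOn (fun x => N.ip (Φ x) (Φ (η : M.X))) (fun x => M.ip x (η : M.X))
        (V : Set M.X) := by
      intro x hx
      show N.ip (Φ x) (Φ (η : M.X)) = M.ip x (η : M.X)
      rw [show x = ((⟨x, hx⟩ : V) : M.X) from rfl, hΦapp, hΦapp, jV_ip]
    exact fun x => congrFun (Continuous.ext_on hdenseV hc1 hc2 heq) x
  have hip' : ∀ x y, N.ip (Φ x) (Φ y) = M.ip x y := by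
    intro x
    have hc1 : Continuous fun y => N.ip (Φ x) (Φ y) :=
      (N.continuous_ip_right _).comp Φ.continuous
    have hc2 : Continuous fun y => M.ip x y := M.continuous_ip_right x
    have heq : Set.EqOn (fun y => N.ip (Φ x) (Φ y)) (fun y => M.ip x y)
        (V : Set M.X) := by
      intro y hy
      show N.ip (Φ x) (Φ y) = M.ip x y
      rw [show y = ((⟨y, hy⟩ : V) : M.X) from rfl]
      exact hipfix ⟨y, hy⟩ x
    exact fun y => congrFun (Continuous.ext_on hdenseV hc1 hc2 heq) y
  exact ⟨Φ, hgen, hnorm, hip'⟩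
section AdjAux

variable {A B : Type u} [NonUnitalCStarAlgebra A] [NonUnitalCStarAlgebra B]

namespace Corr

variable {W : Corr A B}

lemma adj_symm {T S : W.X →L[ℂ] W.X} (h : W.IsAdjointPair T S) : W.IsAdjointPair S T := by
  intro ξ η
  conv_lhs => rw [← W.ip_star η (S ξ)]
  rw [← h η ξ]
  exact W.ip_star _ _

lemma adj_comp {T T' U U' : W.X →L[ℂ] W.X} (h1 : W.IsAdjointPair T T')
    (h2 : W.IsAdjointPair U U') : W.IsAdjointPair (T.comp U) (U'.comp T') := by
  intro ξ η
  simp only [ContinuousLinearMap.comp_apply]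
  rw [h1, h2]

lemma norm_apply_sq_le {S S' : W.X →L[ℂ] W.X} (h : W.IsAdjointPair S S') (ζ : W.X) :
    ‖S ζ‖ ^ 2 ≤ ‖ζ‖ * ‖S' (S ζ)‖ := by
  rw [W.ip_norm]
  rw [h ζ (S ζ)]
  exact W.ip_bound _ _

lemma opnorm_sq_le {S S' : W.X →L[ℂ] W.X} (h : W.IsAdjointPair S S') :
    ‖S‖ ^ 2 ≤ ‖S'.comp S‖ := by
  have hb : ∀ ζ, ‖S ζ‖ ≤ Real.sqrt ‖S'.comp S‖ * ‖ζ‖ := by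
    intro ζ
    have h1 : ‖S ζ‖ ^ 2 ≤ ‖S'.comp S‖ * ‖ζ‖ ^ 2 := by
      have h2 := norm_apply_sq_le h ζ
      have h3 : ‖S' (S ζ)‖ ≤ ‖S'.comp S‖ * ‖ζ‖ := (S'.comp S).le_opNorm ζ
      nlinarith [norm_nonneg ζ, norm_nonneg (S' (S ζ))]
    calc ‖S ζ‖ = Real.sqrt (‖S ζ‖ ^ 2) := (Real.sqrt_sq (norm_nonneg _)).symm
      _ ≤ Real.sqrt (‖S'.comp S‖ * ‖ζ‖ ^ 2) := Real.sqrt_le_sqrt h1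
      _ = Real.sqrt ‖S'.comp S‖ * ‖ζ‖ := by
          rw [Real.sqrt_mul (norm_nonneg _), Real.sqrt_sq (norm_nonneg _)]
  have hS := ContinuousLinearMap.opNorm_le_bound S (Real.sqrt_nonneg _) hb
  calc ‖S‖ ^ 2 ≤ (Real.sqrt ‖S'.comp S‖) ^ 2 := by
        nlinarith [norm_nonneg S, Real.sqrt_nonneg ‖S'.comp S‖]
    _ = ‖S'.comp S‖ := Real.sq_sqrt (norm_nonneg _)

lemma opnorm_adj_le {S S' : W.X →L[ℂ] W.X} (h : W.IsAdjointPair S S') : ‖S'‖ ≤ ‖S‖ := by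
  refine ContinuousLinearMap.opNorm_le_bound _ (norm_nonneg S) fun ζ => ?_
  rcases eq_or_lt_of_le (norm_nonneg (S' ζ)) with h0 | h0
  · rw [← h0]; positivity
  · have h1 : ‖S' ζ‖ ^ 2 ≤ ‖ζ‖ * ‖S (S' ζ)‖ := norm_apply_sq_le (adj_symm h) ζ
    have h2 : ‖S (S' ζ)‖ ≤ ‖S‖ * ‖S' ζ‖ := S.le_opNorm _
    nlinarith [norm_nonneg ζ, norm_nonneg S]

lemma rankOne_adj (x y : W.X) : W.IsAdjointPair (W.rankOne x y) (W.rankOne y x) := by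
  intro ξ η
  rw [W.rankOne_apply, W.rankOne_apply, W.ip_sm_left_s7, W.ip_sm, ← W.ip_star ξ y, star_star]

lemma sum_rankOne_adj (n : ℕ) (x y : Fin n → W.X) :
    W.IsAdjointPair (∑ i, W.rankOne (x i) (y i)) (∑ i, W.rankOne (y i) (x i)) := by
  intro ξ η
  rw [ContinuousLinearMap.sum_apply, ContinuousLinearMap.sum_apply,
    W.ip_sum_left, W.ip_sum_right]
  exact Finset.sum_congr rfl fun i _ => rankOne_adj (x i) (y i) ξ η

lemma sum_rankOne_modmap (n : ℕ) (x y : Fin n → W.X) (z : W.X) (b : B) :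
    (∑ i, W.rankOne (x i) (y i)) (W.sm z b) = W.sm ((∑ i, W.rankOne (x i) (y i)) z) b := by
  rw [ContinuousLinearMap.sum_apply, ContinuousLinearMap.sum_apply, W.sm_sum_left]
  refine Finset.sum_congr rfl fun i _ => ?_
  rw [W.rankOne_apply, W.rankOne_apply, W.ip_sm, ← W.sm_mul]

lemma comp_sum_rankOne (n : ℕ) (x y : Fin n → W.X) (T : W.X →L[ℂ] W.X)
    (hT : ∀ (z : W.X) (b : B), T (W.sm z b) = W.sm (T z) b) :
    T.comp (∑ i, W.rankOne (x i) (y i)) = ∑ i, W.rankOne (T (x i)) (y i) := by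
  ext z
  rw [ContinuousLinearMap.comp_apply, ContinuousLinearMap.sum_apply,
    ContinuousLinearMap.sum_apply, map_sum]
  refine Finset.sum_congr rfl fun i _ => ?_
  rw [W.rankOne_apply, W.rankOne_apply, hT]

lemma rankOne_smul_left (c : ℂ) (x y : W.X) :
    W.rankOne (c • x) y = c • W.rankOne x y := by
  ext z
  rw [W.rankOne_apply, ContinuousLinearMap.smul_apply, W.rankOne_apply, W.sm_smul]

lemma finRank_eq_span (W : Corr A B) :
    {T : W.X →L[ℂ] W.X | ∃ (n : ℕ) (x y : Fin n → W.X), T = ∑ i, W.rankOne (x i) (y i)}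
      = ((Submodule.span ℂ (Set.range fun p : W.X × W.X => W.rankOne p.1 p.2)) :
          Set (W.X →L[ℂ] W.X)) := by
  apply Set.Subset.antisymm
  · rintro T ⟨n, x, y, rfl⟩
    exact Submodule.sum_mem _ fun i _ => Submodule.subset_span ⟨(x i, y i), rfl⟩
  · intro T hT
    refine Submodule.span_induction ?_ ?_ ?_ ?_ hT
    · rintro T ⟨⟨x, y⟩, rfl⟩
      exact ⟨1, fun _ => x, fun _ => y, by simp⟩
    · exact ⟨0, (fun i => i.elim0), (fun i => i.elim0), by simp⟩
    · rintro T T' _ _ ⟨n, x, y, rfl⟩ ⟨m, x', y', rfl⟩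
      refine ⟨n + m, Fin.append x x', Fin.append y y', ?_⟩
      rw [Fin.sum_univ_add]
      congr 1
      · exact Finset.sum_congr rfl fun i _ => by rw [Fin.append_left, Fin.append_left]
      · exact Finset.sum_congr rfl fun i _ => by rw [Fin.append_right, Fin.append_right]
    · rintro c T _ ⟨n, x, y, rfl⟩
      refine ⟨n, fun i => c • x i, y, ?_⟩
      rw [Finset.smul_sum]
      exact Finset.sum_congr rfl fun i _ => (rankOne_smul_left c (x i) (y i)).symm

end Corr

end AdjAux
section SubAux

variable {A B : Type u} [NonUnitalCStarAlgebra A] [NonUnitalCStarAlgebra B]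
variable {E : Corr A A} {F : Corr B B}

namespace SubCorr

/-- `ϕ` as a bundled star algebra homomorphism. -/
def hom (sc : SubCorr E F) : A →⋆ₙₐ[ℂ] B :=
  { toFun := sc.ϕ
    map_smul' := sc.ϕ_smul
    map_zero' := by simpa using sc.ϕ_smul 0 0
    map_add' := sc.ϕ_add
    map_mul' := sc.ϕ_mul
    map_star' := sc.ϕ_star }

lemma ϕ_norm (sc : SubCorr E F) (a : A) : ‖sc.ϕ a‖ = ‖a‖ :=
  NonUnitalStarAlgHom.norm_map sc.hom (fun _ _ hxy => sc.ϕ_inj hxy) a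

lemma φd_zero (sc : SubCorr E F) : sc.φd 0 = 0 := by
  simpa using sc.φd_smul 0 0

lemma φd_norm (sc : SubCorr E F) (x : E.X) : ‖sc.φd x‖ = ‖x‖ := by
  have h2 : ‖sc.φd x‖ ^ 2 = ‖x‖ ^ 2 := by
    rw [F.ip_norm, sc.ip_eq, sc.ϕ_norm, E.ip_norm]
  exact (sq_eq_sq₀ (norm_nonneg _) (norm_nonneg _)).mp h2

/-- `φ̇` as a bundled linear map. -/
def φdL (sc : SubCorr E F) : E.X →ₗ[ℂ] F.X :=
  { toFun := sc.φd
    map_add' := sc.φd_add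
    map_smul' := sc.φd_smul }

@[simp] lemma φdL_apply (sc : SubCorr E F) (x : E.X) : sc.φdL x = sc.φd x := rfl

lemma φd_cont (sc : SubCorr E F) : Continuous sc.φd := by
  have : Isometry sc.φdL := AddMonoidHomClass.isometry_of_norm sc.φdL sc.φd_norm
  exact this.continuous

lemma φd_sum (sc : SubCorr E F) {ι : Type*} (s : Finset ι) (f : ι → E.X) :
    sc.φd (∑ i ∈ s, f i) = ∑ i ∈ s, sc.φd (f i) :=
  map_sum sc.φdL f s

lemma φd_sub (sc : SubCorr E F) (x y : E.X) : sc.φd (x - y) = sc.φd x - sc.φd y :=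
  map_sub sc.φdL x y

lemma phd_sm (sc : SubCorr E F) (x : E.X) (a : A) :
    sc.φd (E.sm x a) = F.sm (sc.φd x) (sc.ϕ a) := by
  set v : B := sc.ϕ (E.ip (E.sm x a) (E.sm x a)) with hv
  have e1 : F.ip (sc.φd (E.sm x a)) (sc.φd (E.sm x a)) = v := sc.ip_eq _ _
  have e2 : F.ip (sc.φd (E.sm x a)) (F.sm (sc.φd x) (sc.ϕ a)) = v := by
    rw [F.ip_sm, sc.ip_eq, ← sc.ϕ_mul, ← E.ip_sm]
  have e3 : F.ip (F.sm (sc.φd x) (sc.ϕ a)) (sc.φd (E.sm x a)) = v := by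
    rw [F.ip_sm_left_s7, ← sc.ϕ_star, sc.ip_eq, ← sc.ϕ_mul, ← E.ip_sm_left_s7]
  have e4 : F.ip (F.sm (sc.φd x) (sc.ϕ a)) (F.sm (sc.φd x) (sc.ϕ a)) = v := by
    rw [F.ip_sm, F.ip_sm_left_s7, sc.ip_eq, ← sc.ϕ_star, ← sc.ϕ_mul, ← sc.ϕ_mul,
      ← E.ip_sm_left_s7, ← E.ip_sm]
  have hz : F.ip (sc.φd (E.sm x a) - F.sm (sc.φd x) (sc.ϕ a))
      (sc.φd (E.sm x a) - F.sm (sc.φd x) (sc.ϕ a)) = 0 := by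
    rw [F.ip_sub_right, F.ip_sub_left, F.ip_sub_left, e1, e2, e3, e4]
    simp
  exact sub_eq_zero.mp (F.eq_zero_of_ip_self_eq_zero hz)

end SubCorr

/-- `S` is the operator on `Y` induced by `T` on `X` (determined on the dense
subspace `φ̇(X)·B`). -/
def IndOp (sc : SubCorr E F) (T : E.X →L[ℂ] E.X) (S : F.X →L[ℂ] F.X) : Prop :=
  ∀ (x : E.X) (b : B), S (F.sm (sc.φd x) b) = F.sm (sc.φd (T x)) b

variable {sc : SubCorr E F}

lemma IndOp.unique {T S S'} (h : IndOp sc T S) (h' : IndOp sc T S') : S = S' := by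
  have key : ∀ ζ, S ζ = S' ζ := by
    refine eqOn_dense_span (s := {y : F.X | ∃ x b, y = F.sm (sc.φd x) b}) sc.dense
      S.continuous S'.continuous ?_ (by simp) ?_ ?_
    · rintro y ⟨x, b, rfl⟩
      rw [h x b, h' x b]
    · intro x y hx hy
      rw [map_add, map_add, hx, hy]
    · intro c x hx
      rw [map_smul, map_smul, hx]
  exact ContinuousLinearMap.ext key

lemma IndOp.comp {T T' S S'} (h : IndOp sc T S) (h' : IndOp sc T' S') :
    IndOp sc (T.comp T') (S.comp S') := by
  intro x b
  rw [ContinuousLinearMap.comp_apply, h' x b, h (T' x) b, ContinuousLinearMap.comp_apply]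

lemma IndOp.sub {T T' S S'} (h : IndOp sc T S) (h' : IndOp sc T' S') :
    IndOp sc (T - T') (S - S') := by
  intro x b
  rw [ContinuousLinearMap.sub_apply, h x b, h' x b, ContinuousLinearMap.sub_apply,
    ← F.sm_sub_left, ← sc.φd_sub]

lemma IndOp.sum_rankOne (n : ℕ) (x y : Fin n → E.X) :
    IndOp sc (∑ i, E.rankOne (x i) (y i))
      (∑ i, F.rankOne (sc.φd (x i)) (sc.φd (y i))) := by
  intro z b
  rw [ContinuousLinearMap.sum_apply, ContinuousLinearMap.sum_apply, sc.φd_sum, F.sm_sum_left]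
  refine Finset.sum_congr rfl fun i _ => ?_
  rw [F.rankOne_apply, E.rankOne_apply, F.ip_sm, sc.ip_eq, ← F.sm_mul, ← sc.phd_sm]

lemma IndOp.adj_pair {T T' S S'} (hE : E.IsAdjointPair T T') (h : IndOp sc T S)
    (h' : IndOp sc T' S') : F.IsAdjointPair S S' := by
  have step1 : ∀ (x : E.X) (b : B) (η : F.X),
      F.ip (S (F.sm (sc.φd x) b)) η = F.ip (F.sm (sc.φd x) b) (S' η) := by
    intro x b
    refine eqOn_dense_span (s := {y : F.X | ∃ x b, y = F.sm (sc.φd x) b})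
      (f := fun η => F.ip (S (F.sm (sc.φd x) b)) η)
      (g := fun η => F.ip (F.sm (sc.φd x) b) (S' η)) sc.dense
      ?_ ?_ ?_ ?_ ?_ ?_
    · exact F.continuous_ip_right _
    · exact (F.continuous_ip_right _).comp S'.continuous
    · rintro η ⟨x', b', rfl⟩
      skip
      simp only [h x b, h' x' b', F.ip_sm, F.ip_sm_left_s7, sc.ip_eq, hE x x']
    · skip
      rw [map_zero, F.ip_zero_right, F.ip_zero_right]
    · intro ζ η hζ hη
      skip
      rw [map_add, F.ip_add, F.ip_add, hζ, hη]
    · intro c η hη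
      skip
      rw [map_smul, F.ip_smul, F.ip_smul, hη]
  intro ζ η
  refine eqOn_dense_span (s := {y : F.X | ∃ x b, y = F.sm (sc.φd x) b})
    (f := fun ζ => F.ip (S ζ) η) (g := fun ζ => F.ip ζ (S' η)) sc.dense
    ?_ ?_ ?_ ?_ ?_ ?_ ζ
  · exact (F.continuous_ip_left _).comp S.continuous
  · exact F.continuous_ip_left _
  · rintro ζ' ⟨x, b, rfl⟩
    exact step1 x b η
  · skip
    rw [map_zero, F.ip_zero_left, F.ip_zero_left]
  · intro ζ₁ ζ₂ h1 h2
    skip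
    rw [map_add, F.ip_add_left, F.ip_add_left, h1, h2]
  · intro c ζ' h1
    skip
    rw [map_smul, F.ip_smul_left, F.ip_smul_left, h1]

end SubAux
/-- Purely real-number bookkeeping for the `2^k`-trick. -/
lemma norm_le_of_est {r t C : ℝ} (hr : 0 ≤ r) (ht : 0 ≤ t) (_hC : 0 ≤ C)
    (h : ∀ k : ℕ, t ^ (2 ^ k) ≤ r ^ (2 ^ k - 1) * C) : t ≤ r := by
  rcases eq_or_lt_of_le hr with hr0 | hr0
  · have h1 := h 1
    rw [← hr0] at h1 ⊢
    norm_num at h1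
    nlinarith
  · by_contra hlt
    push_neg at hlt
    have hq : 1 < t / r := (one_lt_div hr0).mpr hlt
    obtain ⟨m, hm⟩ := pow_unbounded_of_one_lt (C / r) hq
    have hmle : (t / r) ^ m ≤ (t / r) ^ (2 ^ m) :=
      pow_le_pow_right₀ hq.le (Nat.le_of_lt (Nat.lt_two_pow_self (n := m)))
    have hCr : C < r * (t / r) ^ (2 ^ m) := by
      rw [div_lt_iff₀ hr0] at hm
      calc C < (t / r) ^ m * r := hm
        _ ≤ (t / r) ^ (2 ^ m) * r := by nlinarith
        _ = r * (t / r) ^ (2 ^ m) := mul_comm _ _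
    have hK1 : 1 ≤ 2 ^ m := Nat.one_le_two_pow
    have ht' : t ^ (2 ^ m) = r ^ (2 ^ m) * (t / r) ^ (2 ^ m) := by
      rw [← mul_pow, mul_div_cancel₀ t (ne_of_gt hr0)]
    have hrpow : 0 < r ^ (2 ^ m - 1) := pow_pos hr0 _
    have hcontr : r ^ (2 ^ m - 1) * C < t ^ (2 ^ m) := by
      calc r ^ (2 ^ m - 1) * C < r ^ (2 ^ m - 1) * (r * (t / r) ^ (2 ^ m)) :=
            (mul_lt_mul_iff_right₀ hrpow).mpr hCr
        _ = r ^ (2 ^ m) * (t / r) ^ (2 ^ m) := by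
            rw [← mul_assoc, ← pow_succ]
            congr 2
            omega
        _ = t ^ (2 ^ m) := ht'.symm
    exact absurd (h m) (not_le.mpr hcontr)

section MainEst

variable {A B : Type u} [NonUnitalCStarAlgebra A] [NonUnitalCStarAlgebra B]
variable {E : Corr A A} {F : Corr B B} {sc : SubCorr E F}

lemma main_est :
    ∀ (k n : ℕ) (x y : Fin n → E.X) (R : E.X →L[ℂ] E.X) (S : F.X →L[ℂ] F.X),
      R = ∑ i, E.rankOne (x i) (y i) → E.IsAdjointPair R R → IndOp sc R S →
      ‖S‖ ^ (2 ^ k) ≤ ‖R‖ ^ (2 ^ k - 1) * ∑ i, ‖x i‖ * ‖y i‖ := by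
  intro k
  induction k with
  | zero =>
    intro n x y R S hrep _hadj hind
    have hS : S = ∑ i, F.rankOne (sc.φd (x i)) (sc.φd (y i)) :=
      IndOp.unique hind (hrep ▸ IndOp.sum_rankOne n x y)
    norm_num
    calc ‖S‖ ≤ ∑ i, ‖F.rankOne (sc.φd (x i)) (sc.φd (y i))‖ := by
          rw [hS]; exact norm_sum_le _ _
      _ ≤ ∑ i, ‖x i‖ * ‖y i‖ := by
          refine Finset.sum_le_sum fun i _ => ?_
          have hb := F.norm_rankOne_le (sc.φd (x i)) (sc.φd (y i))
          rwa [sc.φd_norm, sc.φd_norm] at hb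
  | succ k ih =>
    intro n x y R S hrep hadj hind
    have hC0 : (0:ℝ) ≤ ∑ i, ‖x i‖ * ‖y i‖ :=
      Finset.sum_nonneg fun i _ => by positivity
    have hmod : ∀ (z : E.X) (b : A), R (E.sm z b) = E.sm (R z) b := by
      intro z b
      rw [hrep]
      exact E.sum_rankOne_modmap n x y z b
    have hR2 : R.comp R = ∑ i, E.rankOne (R (x i)) (y i) := by
      have h0 := E.comp_sum_rankOne n x y R hmod
      rw [← hrep] at h0
      exact h0
    have hadj2 : E.IsAdjointPair (R.comp R) (R.comp R) := Corr.adj_comp hadj hadj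
    have hind2 : IndOp sc (R.comp R) (S.comp S) := hind.comp hind
    have hFadj : F.IsAdjointPair S S := IndOp.adj_pair hadj hind hind
    have hSS := ih n (fun i => R (x i)) y (R.comp R) (S.comp S) hR2 hadj2 hind2
    have h1 : ‖S‖ ^ 2 ≤ ‖S.comp S‖ := Corr.opnorm_sq_le hFadj
    have h2 : (‖S‖ ^ 2) ^ (2 ^ k) ≤ ‖S.comp S‖ ^ (2 ^ k) :=
      pow_le_pow_left₀ (by positivity) h1 _
    have h3 : ∑ i, ‖R (x i)‖ * ‖y i‖ ≤ ‖R‖ * ∑ i, ‖x i‖ * ‖y i‖ := by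
      rw [Finset.mul_sum]
      refine Finset.sum_le_sum fun i _ => ?_
      have := R.le_opNorm (x i)
      nlinarith [norm_nonneg (y i), norm_nonneg (x i), norm_nonneg (R (x i)), norm_nonneg R]
    have h4 : ‖R.comp R‖ ≤ ‖R‖ ^ 2 := by
      rw [sq]
      exact ContinuousLinearMap.opNorm_comp_le R R
    have h5 : ‖S.comp S‖ ^ (2 ^ k) ≤ (‖R‖ ^ 2) ^ (2 ^ k - 1) * (‖R‖ * ∑ i, ‖x i‖ * ‖y i‖) := by
      refine le_trans hSS ?_
      refine mul_le_mul ?_ h3 ?_ ?_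
      · exact pow_le_pow_left₀ (norm_nonneg _) h4 _
      · exact Finset.sum_nonneg fun i _ => by positivity
      · positivity
    have hK1 : 1 ≤ 2 ^ k := Nat.one_le_two_pow
    have hexp : 2 ^ (k + 1) = 2 * 2 ^ k := by rw [pow_succ]; ring
    have hfinal : (‖R‖ ^ 2) ^ (2 ^ k - 1) * (‖R‖ * ∑ i, ‖x i‖ * ‖y i‖)
        = ‖R‖ ^ (2 ^ (k + 1) - 1) * ∑ i, ‖x i‖ * ‖y i‖ := by
      rw [← pow_mul]
      have hexp2 : 2 * (2 ^ k - 1) + 1 = 2 ^ (k + 1) - 1 := by rw [pow_succ]; omega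
      rw [← hexp2, pow_succ]
      ring
    calc ‖S‖ ^ (2 ^ (k + 1)) = (‖S‖ ^ 2) ^ (2 ^ k) := by rw [hexp, pow_mul]
      _ ≤ ‖S.comp S‖ ^ (2 ^ k) := h2
      _ ≤ (‖R‖ ^ 2) ^ (2 ^ k - 1) * (‖R‖ * ∑ i, ‖x i‖ * ‖y i‖) := h5
      _ = ‖R‖ ^ (2 ^ (k + 1) - 1) * ∑ i, ‖x i‖ * ‖y i‖ := hfinal

lemma IndOp.opnorm_le {n : ℕ} {x y : Fin n → E.X} {T : E.X →L[ℂ] E.X} {S : F.X →L[ℂ] F.X}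
    (hrep : T = ∑ i, E.rankOne (x i) (y i)) (hind : IndOp sc T S) : ‖S‖ ≤ ‖T‖ := by
  have hadj : E.IsAdjointPair T (∑ i, E.rankOne (y i) (x i)) := by
    rw [hrep]
    exact Corr.sum_rankOne_adj n x y
  set T' : E.X →L[ℂ] E.X := ∑ i, E.rankOne (y i) (x i) with hT'
  set S' : F.X →L[ℂ] F.X := ∑ i, F.rankOne (sc.φd (y i)) (sc.φd (x i)) with hS'
  have hind' : IndOp sc T' S' := IndOp.sum_rankOne n y x
  have hmodT' : ∀ (z : E.X) (b : A), T' (E.sm z b) = E.sm (T' z) b :=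
    E.sum_rankOne_modmap n y x
  have hR2 : T'.comp T = ∑ i, E.rankOne (T' (x i)) (y i) := by
    rw [hrep]
    exact E.comp_sum_rankOne n x y T' hmodT'
  have hadj2 : E.IsAdjointPair (T'.comp T) (T'.comp T) :=
    Corr.adj_comp (Corr.adj_symm hadj) hadj
  have hind2 : IndOp sc (T'.comp T) (S'.comp S) := hind'.comp hind
  have hest := fun k => main_est k n (fun i => T' (x i)) y (T'.comp T) (S'.comp S)
    hR2 hadj2 hind2
  have hle1 : ‖S'.comp S‖ ≤ ‖T'.comp T‖ :=
    norm_le_of_est (norm_nonneg _) (norm_nonneg _)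
      (Finset.sum_nonneg fun i _ => by positivity) hest
  have hFadj : F.IsAdjointPair S S' := IndOp.adj_pair hadj hind hind'
  have h2 : ‖S‖ ^ 2 ≤ ‖S'.comp S‖ := Corr.opnorm_sq_le hFadj
  have h3 : ‖T'.comp T‖ ≤ ‖T'‖ * ‖T‖ := ContinuousLinearMap.opNorm_comp_le _ _
  have h4 : ‖T'‖ ≤ ‖T‖ := Corr.opnorm_adj_le hadj
  nlinarith [norm_nonneg S, norm_nonneg T, norm_nonneg T']

end MainEst
section Transfer

variable {A B : Type u} [NonUnitalCStarAlgebra A] [NonUnitalCStarAlgebra B]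

open Filter Topology

lemma Corr.comp_lmul_mem_compacts (F : Corr B B) {S : F.X →L[ℂ] F.X}
    (hS : S ∈ F.compacts) (b : B) : S.comp (F.lmul b) ∈ F.compacts := by
  set Rc : (F.X →L[ℂ] F.X) →L[ℂ] (F.X →L[ℂ] F.X) := LinearMap.mkContinuous
    { toFun := fun S => S.comp (F.lmul b)
      map_add' := fun S T => ContinuousLinearMap.add_comp _ _ _
      map_smul' := fun c S => ContinuousLinearMap.smul_comp c S _ } ‖F.lmul b‖
    (fun S => by
      rw [mul_comm]
      exact ContinuousLinearMap.opNorm_comp_le _ _) with hRc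
  have hRcapp : ∀ S, Rc S = S.comp (F.lmul b) := fun _ => rfl
  have himg : ∀ T ∈ Submodule.span ℂ (Set.range fun p : F.X × F.X => F.rankOne p.1 p.2),
      Rc T ∈ Submodule.span ℂ (Set.range fun p : F.X × F.X => F.rankOne p.1 p.2) := by
    intro T hT
    refine Submodule.span_induction ?_ ?_ ?_ ?_ hT
    · rintro T ⟨⟨u, v⟩, rfl⟩
      refine Submodule.subset_span ⟨(u, F.la (star b) v), ?_⟩
      ext z
      rw [F.rankOne_apply, hRcapp, ContinuousLinearMap.comp_apply, F.rankOne_apply,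
        F.lmul_apply]
      congr 1
      rw [F.la_adj, star_star]
    · rw [map_zero]; exact Submodule.zero_mem _
    · intro T T' _ _ h1 h2
      rw [map_add]; exact Submodule.add_mem _ h1 h2
    · intro c T _ h1
      rw [map_smul]; exact Submodule.smul_mem _ c h1
  have h1 : Rc S ∈ Rc '' closure
      (Submodule.span ℂ (Set.range fun p : F.X × F.X => F.rankOne p.1 p.2) :
        Set (F.X →L[ℂ] F.X)) := Set.mem_image_of_mem _ hS
  have h2 := image_closure_subset_closure_image (f := ⇑Rc)
    (s := (Submodule.span ℂ (Set.range fun p : F.X × F.X => F.rankOne p.1 p.2) :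
      Set (F.X →L[ℂ] F.X))) Rc.continuous
  have h3 : Rc '' (Submodule.span ℂ (Set.range fun p : F.X × F.X => F.rankOne p.1 p.2) :
      Set (F.X →L[ℂ] F.X)) ⊆
      (Submodule.span ℂ (Set.range fun p : F.X × F.X => F.rankOne p.1 p.2) :
        Set (F.X →L[ℂ] F.X)) := by
    rintro _ ⟨T, hT, rfl⟩
    exact himg T hT
  exact closure_mono h3 (h2 h1)

variable {E : Corr A A} {F : Corr B B}

lemma compacts_transfer (sc : SubCorr E F) {a : A} (ha : E.lmul a ∈ E.compacts) :
    F.lmul (sc.ϕ a) ∈ F.compacts := by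
  obtain ⟨useq, humem, hulim⟩ := mem_closure_iff_seq_limit.mp ha
  have hfr : ∀ m, useq m ∈ {T : E.X →L[ℂ] E.X |
      ∃ (n : ℕ) (x y : Fin n → E.X), T = ∑ i, E.rankOne (x i) (y i)} := by
    intro m
    rw [E.finRank_eq_span]
    exact humem m
  choose nn xx yy hxy using hfr
  set SS : ℕ → (F.X →L[ℂ] F.X) :=
    fun m => ∑ i, F.rankOne (sc.φd (xx m i)) (sc.φd (yy m i)) with hSS
  have hSind : ∀ m, IndOp sc (useq m) (SS m) := by
    intro m
    rw [hxy m]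
    exact IndOp.sum_rankOne _ _ _
  have hdiff : ∀ m l, ‖SS m - SS l‖ ≤ ‖useq m - useq l‖ := by
    intro m l
    have hmem : useq m - useq l ∈ {T : E.X →L[ℂ] E.X |
        ∃ (n : ℕ) (x y : Fin n → E.X), T = ∑ i, E.rankOne (x i) (y i)} := by
      rw [E.finRank_eq_span]
      exact Submodule.sub_mem _ (humem m) (humem l)
    obtain ⟨n', x', y', heq⟩ := hmem
    exact IndOp.opnorm_le heq ((hSind m).sub (hSind l))
  have hcS : CauchySeq SS := by
    have hcu : CauchySeq useq := hulim.cauchySeq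
    rw [Metric.cauchySeq_iff] at hcu ⊢
    intro ε hε
    obtain ⟨N, hN⟩ := hcu ε hε
    refine ⟨N, fun m hm l hl => ?_⟩
    have := hN m hm l hl
    rw [dist_eq_norm] at this ⊢
    exact lt_of_le_of_lt (hdiff m l) this
  obtain ⟨L, hL⟩ := cauchySeq_tendsto_of_complete hcS
  have hLmem : L ∈ F.compacts := by
    refine mem_closure_of_tendsto hL (Filter.Eventually.of_forall fun m => ?_)
    have : SS m ∈ {T : F.X →L[ℂ] F.X |
        ∃ (n : ℕ) (x y : Fin n → F.X), T = ∑ i, F.rankOne (x i) (y i)} :=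
      ⟨nn m, fun i => sc.φd (xx m i), fun i => sc.φd (yy m i), rfl⟩
    rw [F.finRank_eq_span] at this
    exact this
  have hgoal : F.lmul (sc.ϕ a) = L := by
    refine ContinuousLinearMap.ext ?_
    refine eqOn_dense_span (s := {y : F.X | ∃ x b, y = F.sm (sc.φd x) b})
      (f := fun ζ => F.lmul (sc.ϕ a) ζ) (g := fun ζ => L ζ) sc.dense
      (F.lmul (sc.ϕ a)).continuous L.continuous ?_ (by rw [map_zero, map_zero]) ?_ ?_
    · rintro ζ ⟨x, b, rfl⟩
      skip
      have hpt : Tendsto (fun m => SS m (F.sm (sc.φd x) b)) atTop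
          (𝓝 (L (F.sm (sc.φd x) b))) := by
        have happ := (ContinuousLinearMap.apply ℂ F.X (F.sm (sc.φd x) b)).continuous
        exact (happ.tendsto L).comp hL
      have hpt2 : Tendsto (fun m => SS m (F.sm (sc.φd x) b)) atTop
          (𝓝 (F.sm (sc.φd (E.la a x)) b)) := by
        have h1 : ∀ m, SS m (F.sm (sc.φd x) b) = F.sm (sc.φd (useq m x)) b :=
          fun m => hSind m x b
        have h2 : Tendsto (fun m => useq m x) atTop (𝓝 (E.lmul a x)) := by
          have happE := (ContinuousLinearMap.apply ℂ E.X x).continuous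
          exact (happE.tendsto (E.lmul a)).comp hulim
        have h3 : Tendsto (fun m => F.sm (sc.φd (useq m x)) b) atTop
            (𝓝 (F.sm (sc.φd (E.lmul a x)) b)) := by
          have hcont : Continuous (fun z : E.X => F.sm (sc.φd z) b) :=
            (F.smL b).continuous.comp sc.φd_cont
          exact (hcont.tendsto _).comp h2
        rw [E.lmul_apply] at h3
        exact (Filter.tendsto_congr fun m => (h1 m).symm).mp h3
      have := tendsto_nhds_unique hpt hpt2
      rw [this, F.lmul_apply, F.la_sm, ← sc.la_eq]
    · intro ζ η h1 h2
      skip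
      rw [map_add, map_add, h1, h2]
    · intro c ζ h1
      skip
      rw [map_smul, map_smul, h1]
  rw [hgoal]
  exact hLmem

lemma lmul_zero (F : Corr B B) : F.lmul (0 : B) = 0 := by
  ext z
  rw [F.lmul_apply, F.la_zero_left, ContinuousLinearMap.zero_apply]

lemma katsura_transfer (sc : SubCorr E F) (hinj : F.Injective) :
    ∀ a ∈ E.katsuraIdeal, ∀ b : B, sc.ϕ a * b ∈ F.katsuraIdeal := by
  intro a ha b
  constructor
  · have h1 : F.lmul (sc.ϕ a) ∈ F.compacts := compacts_transfer sc ha.1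
    have hcomp : F.lmul (sc.ϕ a * b) = (F.lmul (sc.ϕ a)).comp (F.lmul b) := by
      ext z
      rw [F.lmul_apply, F.la_mul, ContinuousLinearMap.comp_apply, F.lmul_apply, F.lmul_apply]
    rw [hcomp]
    exact F.comp_lmul_mem_compacts h1 b
  · intro b' hb'
    have hb0 : b' = 0 := hinj (by rw [hb', lmul_zero])
    rw [hb0, mul_zero]

end Transfer
lemma key_factor {B : Type*} [NonUnitalCStarAlgebra B] (c : B) :
    c ∈ closure {x : B | ∃ e : B, x = e * c} := by
  rw [Metric.mem_closure_iff]
  intro ε hε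
  obtain ⟨n, hn⟩ := exists_nat_gt ((1 / ε ^ 2) ^ 2)
  set p : B := c * star c with hp
  have hpsa : IsSelfAdjoint p := IsSelfAdjoint.mul_star_self c
  set f : ℝ → ℝ := fun t => (n * t ^ 2) / (1 + n * t ^ 2) with hf
  have hfc : Continuous f := by
    apply Continuous.div (by fun_prop) (by fun_prop)
    intro t
    positivity
  have hf0 : f 0 = 0 := by simp [hf]
  set e : B := cfcₙ f p with he
  refine ⟨e * c, ⟨e, rfl⟩, ?_⟩
  have hesa : IsSelfAdjoint e := cfcₙ_predicate f p
  set g : ℝ → ℝ := fun t => t - t * f t - f t * t + f t * t * f t with hg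
  have hgc : Continuous g := by fun_prop
  have hg0 : g 0 = 0 := by simp [hg, hf0]
  have hmain : (c - e * c) * star (c - e * c) = cfcₙ g p := by
    have hstar : star (c - e * c) = star c - star c * e := by
      simp [star_sub, star_mul, hesa.star_eq]
    rw [hstar]
    have h1 : cfcₙ (fun t : ℝ => t * f t) p = p * e :=  by
      rw [cfcₙ_mul _ _ p (by fun_prop) (by simp) hfc.continuousOn hf0, cfcₙ_id' ℝ p]
    have h2 : cfcₙ (fun t : ℝ => f t * t) p = e * p := by
      rw [cfcₙ_mul _ _ p hfc.continuousOn hf0 (by fun_prop) (by simp), cfcₙ_id' ℝ p]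
    have h3 : cfcₙ (fun t : ℝ => f t * t * f t) p = e * p * e := by
      rw [cfcₙ_mul _ _ p (by fun_prop) (by simp [hf0]) hfc.continuousOn hf0, h2]
    have hgsplit : cfcₙ g p = p - p * e - e * p + e * p * e := by
      rw [hg]
      rw [cfcₙ_add _ _ p (by fun_prop) (by simp [hf0]) (by fun_prop) (by simp [hf0])]
      rw [cfcₙ_sub _ _ p (by fun_prop) (by simp [hf0]) (by fun_prop) (by simp [hf0])]
      rw [cfcₙ_sub _ _ p (by fun_prop) (by simp) (by fun_prop) (by simp [hf0])]
      rw [cfcₙ_id' ℝ p, h1, h2, h3]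
    rw [hgsplit]
    simp only [hp, mul_assoc]
    noncomm_ring
  have hn0 : (0:ℝ) < n := lt_of_le_of_lt (by positivity) hn
  set s : ℝ := Real.sqrt n with hsdef
  have hs0 : 0 < s := Real.sqrt_pos.mpr hn0
  have hs2 : s ^ 2 = n := Real.sq_sqrt hn0.le
  have habs : ∀ t : ℝ, |g t| ≤ 1 / (2 * s) := by
    intro t
    have hd : (0:ℝ) < 1 + n * t ^ 2 := by positivity
    have hgt : g t = t / (1 + n * t ^ 2) ^ 2 := by
      simp only [hg, hf]
      field_simp
      ring
    rw [hgt, abs_div, abs_of_pos (by positivity : (0:ℝ) < (1 + n * t^2)^2)]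
    rw [div_le_div_iff₀ (by positivity) (by positivity)]
    have hamgm : 2 * s * |t| ≤ 1 + n * t ^ 2 := by
      nlinarith [sq_nonneg (1 - s * |t|), sq_abs t, hs2]
    have hd1 : (1:ℝ) ≤ 1 + n * t ^ 2 := by nlinarith
    calc |t| * (2 * s) = 2 * s * |t| := by ring
      _ ≤ 1 + n * t ^ 2 := hamgm
      _ ≤ (1 + n * t ^ 2) ^ 2 := by nlinarith
      _ = 1 * (1 + n * t ^ 2) ^ 2 := by ring
  have hnorm : ‖cfcₙ g p‖ ≤ 1 / (2 * s) :=
    norm_cfcₙ_le (fun t _ => by rw [Real.norm_eq_abs]; exact habs t)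
  have hsq : ‖c - e * c‖ ^ 2 = ‖cfcₙ g p‖ := by
    rw [← hmain, CStarRing.norm_self_mul_star, sq]
  have hlt : 1 / (2 * s) < ε ^ 2 := by
    have h1 : 1 / ε ^ 2 < s := by
      have := hn
      rw [← hs2] at this
      exact lt_of_pow_lt_pow_left₀ 2 hs0.le this
    rw [div_lt_iff₀ (by positivity)]
    rw [div_lt_iff₀ (by positivity)] at h1
    nlinarith
  have : ‖c - e * c‖ ^ 2 < ε ^ 2 := by rw [hsq]; exact lt_of_le_of_lt hnorm hlt
  rw [dist_eq_norm]
  exact lt_of_pow_lt_pow_left₀ 2 hε.le this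

/-- Let `X` (over `A`) be a nondegenerate subcorrespondence of `Y`
(over `B`) via `(φ̇, ϕ)`, and regard `B` as an `A–B` correspondence via `ϕ`.
If `J_X · B ⊆ J_Y`, then `[B, U_B]` is a morphism `X → Y` in `ECCor`, where
`U_B = j⁻¹ ∘ ξ` with `ξ(x ⊗ b) = φ̇(x)b` and `j(b ⊗ y) = b · y`.  Moreover
`J_X · B ⊆ J_Y` holds automatically when `Y` is injective. -/
theorem subcorrespondence_gives_morphism
    (A B : Type u) [NonUnitalCStarAlgebra A] [NonUnitalCStarAlgebra B]
    (E : Corr A A) (F : Corr B B)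
    (sc : SubCorr E F)
    -- B as an A–B correspondence via ϕ
    (Bc : Corr A B) (pc : PullCorr sc.ϕ Bc)
    -- the tensor products X ⊗_A B and B ⊗_B Y
    (TXB : Corr A B) (td1 : TensorData E Bc TXB)
    (TBY : Corr A B) (td2 : TensorData Bc F TBY) :
    -- B is a regular A–B correspondence
    Bc.Regular ∧
    -- if J_X · B ⊆ J_Y then [B, U_B] is a morphism in ECCor
    ((∀ a ∈ E.katsuraIdeal, ∀ b : B, sc.ϕ a * b ∈ F.katsuraIdeal) →
      (KatsuraCompat E Bc F ∧
       ∃ (U : CorrIso TXB TBY) (jm : TBY.X → F.X),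
         (∀ ζ η, jm (ζ + η) = jm ζ + jm η) ∧
         (∀ (c : ℂ) ζ, jm (c • ζ) = c • jm ζ) ∧
         Continuous jm ∧ Function.Injective jm ∧
         (∀ (b : B) (y : F.X), jm (td2.mk2 (pc.u b) y) = F.la b y) ∧
         (∀ (x : E.X) (b : B), jm (U.toFun (td1.mk2 x (pc.u b))) = F.sm (sc.φd x) b))) ∧
    -- the condition J_X · B ⊆ J_Y holds automatically when Y is injective
    (F.Injective → ∀ a ∈ E.katsuraIdeal, ∀ b : B, sc.ϕ a * b ∈ F.katsuraIdeal) := by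
  classical
  -- basic facts about `u` and its inverse
  have unorm : ∀ d : B, ‖pc.u d‖ = ‖d‖ := by
    intro d
    have h2 : ‖pc.u d‖ ^ 2 = ‖d‖ ^ 2 := by
      rw [Bc.ip_norm, pc.ip, CStarRing.norm_star_mul_self, sq]
    exact (sq_eq_sq₀ (norm_nonneg _) (norm_nonneg _)).mp h2
  set uLin : B →ₗ[ℂ] Bc.X :=
    { toFun := pc.u
      map_add' := pc.add
      map_smul' := pc.smul } with huLin
  have ucont : Continuous pc.u := by
    have : Isometry uLin := AddMonoidHomClass.isometry_of_norm uLin unorm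
    exact this.continuous
  set vB : Bc.X → B := ⇑(Equiv.ofBijective pc.u pc.bij).symm with hvB
  have huv : ∀ z : Bc.X, pc.u (vB z) = z := fun z =>
    (Equiv.ofBijective pc.u pc.bij).apply_symm_apply z
  have hvu : ∀ d : B, vB (pc.u d) = d := fun d =>
    (Equiv.ofBijective pc.u pc.bij).symm_apply_apply d
  have vadd : ∀ z z' : Bc.X, vB (z + z') = vB z + vB z' := by
    intro z z'
    apply pc.bij.1
    rw [pc.add, huv, huv, huv]
  have vsmul : ∀ (c : ℂ) (z : Bc.X), vB (c • z) = c • vB z := by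
    intro c z
    apply pc.bij.1
    rw [pc.smul, huv, huv]
  have vnorm : ∀ z : Bc.X, ‖vB z‖ = ‖z‖ := by
    intro z
    rw [← unorm, huv]
  -- the left multiplication operators on `Bc`
  set Lb : B → (Bc.X →L[ℂ] Bc.X) := fun b => LinearMap.mkContinuous
    { toFun := fun z => pc.u (b * vB z)
      map_add' := by
        intro z z'
        show pc.u (b * vB (z + z')) = pc.u (b * vB z) + pc.u (b * vB z')
        rw [vadd, mul_add, pc.add]
      map_smul' := by
        intro c z
        show pc.u (b * vB (c • z)) = c • pc.u (b * vB z)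
        rw [vsmul, mul_smul_comm, pc.smul] }
    ‖b‖ (fun z => by
      show ‖pc.u (b * vB z)‖ ≤ ‖b‖ * ‖z‖
      rw [unorm]
      calc ‖b * vB z‖ ≤ ‖b‖ * ‖vB z‖ := norm_mul_le _ _
        _ = ‖b‖ * ‖z‖ := by rw [vnorm]) with hLbdef
  have hLbapp : ∀ (b : B) (z : Bc.X), Lb b z = pc.u (b * vB z) := fun b z => rfl
  have hLbu : ∀ b d : B, Lb b (pc.u d) = pc.u (b * d) := by
    intro b d
    rw [hLbapp, hvu]
  have hLadd : ∀ b b' : B, Lb (b + b') = Lb b + Lb b' := by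
    intro b b'
    ext z
    rw [ContinuousLinearMap.add_apply, hLbapp, hLbapp, hLbapp, add_mul, pc.add]
  have hLsmul : ∀ (c : ℂ) (b : B), Lb (c • b) = c • Lb b := by
    intro c b
    ext z
    rw [ContinuousLinearMap.smul_apply, hLbapp, hLbapp, smul_mul_assoc, pc.smul]
  have hLnorm : ∀ b, ‖Lb b‖ ≤ ‖b‖ :=
    fun b => LinearMap.mkContinuous_norm_le _ (norm_nonneg b) _
  have hLcont : Continuous Lb := by
    set LbL : B →L[ℂ] (Bc.X →L[ℂ] Bc.X) := LinearMap.mkContinuous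
      { toFun := Lb
        map_add' := hLadd
        map_smul' := hLsmul } 1
      (fun b => by rw [one_mul]; exact hLnorm b) with hLbL
    exact LbL.continuous
  have hlmulB : ∀ a : A, Bc.lmul a = Lb (sc.ϕ a) := by
    intro a
    ext z
    rw [Bc.lmul_apply, hLbapp]
    conv_lhs => rw [← huv z]
    rw [pc.la]
  -- rank one operators on `Bc` are left multiplications
  have hrank : ∀ d d' : B, Lb (d * star d') = Bc.rankOne (pc.u d) (pc.u d') := by
    intro d d'
    ext z
    rw [hLbapp, Bc.rankOne_apply]
    conv_rhs => rw [← huv z]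
    rw [pc.ip, pc.sm, mul_assoc]
  -- every `Lb b` is compact
  have hLmem : ∀ b : B, Lb b ∈ Bc.compacts := by
    intro b
    have hsub : {x : B | ∃ e : B, x = e * b} ⊆ Lb ⁻¹' Bc.compacts := by
      rintro x ⟨e, rfl⟩
      have hx : e * b = e * star (star b) := by rw [star_star]
      show Lb (e * b) ∈ Bc.compacts
      rw [hx, hrank e (star b)]
      exact subset_closure (Submodule.subset_span ⟨(pc.u e, pc.u (star b)), rfl⟩)
    have hclosed : IsClosed (Lb ⁻¹' Bc.compacts) := (isClosed_closure).preimage hLcont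
    exact closure_minimal hsub hclosed (key_factor b)
  -- Part 1 : regularity of `Bc`
  have hreg : Bc.Regular := by
    constructor
    · intro a a' h
      have hd : ∀ d : B, sc.ϕ a * d = sc.ϕ a' * d := by
        intro d
        apply pc.bij.1
        rw [← pc.la, ← pc.la, ← Bc.lmul_apply, ← Bc.lmul_apply, h]
      have hc : (sc.ϕ a - sc.ϕ a') * star (sc.ϕ a - sc.ϕ a') = 0 := by
        rw [sub_mul, hd (star (sc.ϕ a - sc.ϕ a')), sub_self]
      have hno : ‖sc.ϕ a - sc.ϕ a'‖ * ‖sc.ϕ a - sc.ϕ a'‖ = 0 := by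
        rw [← CStarRing.norm_self_mul_star, hc, norm_zero]
      have h0 : sc.ϕ a - sc.ϕ a' = 0 := by
        have := mul_self_eq_zero.mp hno
        exact norm_eq_zero.mp this
      exact sc.ϕ_inj (sub_eq_zero.mp h0)
    · intro a
      rw [hlmulB]
      exact hLmem _
  refine ⟨hreg, ?_, fun hinj => katsura_transfer sc hinj⟩
  intro H
  constructor
  · -- Katsura compatibility
    intro a ha m
    have hc : sc.ϕ a * vB m ∈ F.katsuraIdeal := H a ha (vB m)
    have heq : Bc.la a m = pc.u (sc.ϕ a * vB m) := by
      conv_lhs => rw [← huv m]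
      rw [pc.la]
    show Bc.la a m ∈ closure ((Submodule.span ℂ
      {ξ : Bc.X | ∃ (m' : Bc.X) (b : B), b ∈ F.katsuraIdeal ∧ ξ = Bc.sm m' b} :
        Submodule ℂ Bc.X) : Set Bc.X)
    have hsub : {x : B | ∃ e : B, x = e * (sc.ϕ a * vB m)} ⊆
        pc.u ⁻¹' (closure ((Submodule.span ℂ
          {ξ : Bc.X | ∃ (m' : Bc.X) (b : B), b ∈ F.katsuraIdeal ∧ ξ = Bc.sm m' b} :
            Submodule ℂ Bc.X) : Set Bc.X)) := by
      rintro x ⟨e, rfl⟩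
      refine subset_closure (Submodule.subset_span ?_)
      exact ⟨pc.u e, sc.ϕ a * vB m, hc, (pc.sm e (sc.ϕ a * vB m)).symm⟩
    have hclosed : IsClosed (pc.u ⁻¹' (closure ((Submodule.span ℂ
        {ξ : Bc.X | ∃ (m' : Bc.X) (b : B), b ∈ F.katsuraIdeal ∧ ξ = Bc.sm m' b} :
          Submodule ℂ Bc.X) : Set Bc.X))) := isClosed_closure.preimage ucont
    have := closure_minimal hsub hclosed (key_factor (sc.ϕ a * vB m))
    rw [heq]
    exact this
  · -- the isomorphism `U` and the map `jm`
    -- ξf : X ⊗ B → Y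
    have hrange1 : Set.range (fun p : E.X × B => td1.mk2 p.1 (pc.u p.2))
        = Set.range (fun p : E.X × Bc.X => td1.mk2 p.1 p.2) := by
      ext z
      constructor
      · rintro ⟨⟨x, b⟩, rfl⟩
        exact ⟨(x, pc.u b), rfl⟩
      · rintro ⟨⟨x, mm⟩, rfl⟩
        exact ⟨(x, vB mm), by simp only [huv]⟩
    have hdense1 : closure ((Submodule.span ℂ (Set.range fun p : E.X × B =>
        td1.mk2 p.1 (pc.u p.2)) : Submodule ℂ TXB.X) : Set TXB.X) = Set.univ := by
      rw [hrange1]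
      exact td1.dense
    obtain ⟨ξf, hξgen, hξnorm, hξip⟩ := Corr.extension TXB F
      (fun p : E.X × B => td1.mk2 p.1 (pc.u p.2))
      (fun p : E.X × B => F.sm (sc.φd p.1) p.2)
      (by
        rintro ⟨x, b⟩ ⟨x', b'⟩
        show F.ip (F.sm (sc.φd x) b) (F.sm (sc.φd x') b')
          = TXB.ip (td1.mk2 x (pc.u b)) (td1.mk2 x' (pc.u b'))
        rw [td1.ip_mk, pc.la, pc.ip, F.ip_sm, F.ip_sm_left_s7, sc.ip_eq, mul_assoc])
      hdense1
    -- jm : B ⊗ Y → Y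
    have hrange2 : Set.range (fun p : B × F.X => td2.mk2 (pc.u p.1) p.2)
        = Set.range (fun p : Bc.X × F.X => td2.mk2 p.1 p.2) := by
      ext z
      constructor
      · rintro ⟨⟨b, y⟩, rfl⟩
        exact ⟨(pc.u b, y), rfl⟩
      · rintro ⟨⟨mm, y⟩, rfl⟩
        exact ⟨(vB mm, y), by simp only [huv]⟩
    have hdense2 : closure ((Submodule.span ℂ (Set.range fun p : B × F.X =>
        td2.mk2 (pc.u p.1) p.2) : Submodule ℂ TBY.X) : Set TBY.X) = Set.univ := by
      rw [hrange2]
      exact td2.dense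
    obtain ⟨jm, hjgen, hjnorm, hjip⟩ := Corr.extension TBY F
      (fun p : B × F.X => td2.mk2 (pc.u p.1) p.2)
      (fun p : B × F.X => F.la p.1 p.2)
      (by
        rintro ⟨b, y⟩ ⟨b', y'⟩
        show F.ip (F.la b y) (F.la b' y') = TBY.ip (td2.mk2 (pc.u b) y) (td2.mk2 (pc.u b') y')
        rw [td2.ip_mk, pc.ip, F.la_adj, ← F.la_mul])
      hdense2
    -- surjectivity of the two isometries
    have hξiso : Isometry ⇑ξf := AddMonoidHomClass.isometry_of_norm ξf hξnorm
    have hjiso : Isometry ⇑jm := AddMonoidHomClass.isometry_of_norm jm hjnorm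
    have hsurj : ∀ (G : Corr A B) (Φ : G.X →L[ℂ] F.X) (hiso : Isometry ⇑Φ)
        (s : Set F.X), (s ⊆ Set.range ⇑Φ) →
        closure ((Submodule.span ℂ s : Submodule ℂ F.X) : Set F.X) = Set.univ →
        Function.Surjective ⇑Φ := by
      intro G Φ hiso s hsub hdense
      have hclosed : IsClosed (Set.range ⇑Φ) := hiso.isClosedEmbedding.isClosed_range
      have hspan : ((Submodule.span ℂ s : Submodule ℂ F.X) : Set F.X) ⊆ Set.range ⇑Φ := by
        intro y hy
        refine Submodule.span_induction (fun y hy => hsub hy) ⟨0, map_zero _⟩ ?_ ?_ hy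
        · rintro y₁ y₂ _ _ ⟨z₁, rfl⟩ ⟨z₂, rfl⟩
          exact ⟨z₁ + z₂, map_add _ _ _⟩
        · rintro c y₁ _ ⟨z₁, rfl⟩
          exact ⟨c • z₁, map_smul _ _ _⟩
      intro y
      exact closure_minimal hspan hclosed (by rw [hdense]; trivial)
    have hξsurj : Function.Surjective ⇑ξf := by
      refine hsurj TXB ξf hξiso {y : F.X | ∃ x b, y = F.sm (sc.φd x) b} ?_ sc.dense
      rintro y ⟨x, b, rfl⟩
      exact ⟨td1.mk2 x (pc.u b), hξgen (x, b)⟩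
    have hjsurj : Function.Surjective ⇑jm := by
      refine hsurj TBY jm hjiso {y : F.X | ∃ (a : B) (x : F.X), y = F.la a x} ?_ F.nondeg
      rintro y ⟨b, y', rfl⟩
      exact ⟨td2.mk2 (pc.u b) y', hjgen (b, y')⟩
    have hξbij : Function.Bijective ⇑ξf := ⟨hξiso.injective, hξsurj⟩
    have hjbij : Function.Bijective ⇑jm := ⟨hjiso.injective, hjsurj⟩
    set ξE : TXB.X ≃ F.X := Equiv.ofBijective ⇑ξf hξbij with hξE
    set jE : TBY.X ≃ F.X := Equiv.ofBijective ⇑jm hjbij with hjE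
    have hjsymm : ∀ w : F.X, jm (jE.symm w) = w := fun w => jE.apply_symm_apply w
    have hjsymm2 : ∀ ζ : TBY.X, jE.symm (jm ζ) = ζ := fun ζ => jE.symm_apply_apply ζ
    have hξsymm : ∀ w : F.X, ξf (ξE.symm w) = w := fun w => ξE.apply_symm_apply w
    have hξsymm2 : ∀ ζ : TXB.X, ξE.symm (ξf ζ) = ζ := fun ζ => ξE.symm_apply_apply ζ
    -- intertwining of left actions
    have hξla : ∀ (a : A) (ζ : TXB.X), ξf (TXB.la a ζ) = F.la (sc.ϕ a) (ξf ζ) := by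
      intro a
      refine eqOn_dense_span (s := Set.range fun p : E.X × Bc.X => td1.mk2 p.1 p.2)
        (f := fun ζ => ξf (TXB.la a ζ)) (g := fun ζ => F.la (sc.ϕ a) (ξf ζ)) td1.dense
        (ξf.continuous.comp (TXB.lmul a).continuous)
        ((F.lmul (sc.ϕ a)).continuous.comp ξf.continuous) ?_ ?_ ?_ ?_
      · rintro ζ ⟨⟨x, mm⟩, rfl⟩
        dsimp only
        rw [td1.la_mk]
        have hx := hξgen (E.la a x, vB mm)
        have hx2 := hξgen (x, vB mm)
        simp only [huv] at hx hx2
        rw [hx, hx2, sc.la_eq, ← F.la_sm]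
      · skip
        rw [TXB.la_zero_right, map_zero, F.la_zero_right]
      · intro ζ η h1 h2
        skip
        rw [TXB.la_add, map_add, h1, h2, map_add, F.la_add]
      · intro c ζ h1
        skip
        rw [TXB.la_smul, map_smul, h1, map_smul, F.la_smul]
    have hjla : ∀ (a : A) (ζ : TBY.X), jm (TBY.la a ζ) = F.la (sc.ϕ a) (jm ζ) := by
      intro a
      refine eqOn_dense_span (s := Set.range fun p : Bc.X × F.X => td2.mk2 p.1 p.2)
        (f := fun ζ => jm (TBY.la a ζ)) (g := fun ζ => F.la (sc.ϕ a) (jm ζ)) td2.dense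
        (jm.continuous.comp (TBY.lmul a).continuous)
        ((F.lmul (sc.ϕ a)).continuous.comp jm.continuous) ?_ ?_ ?_ ?_
      · rintro ζ ⟨⟨mm, y⟩, rfl⟩
        dsimp only
        rw [td2.la_mk]
        have hla : Bc.la a mm = pc.u (sc.ϕ a * vB mm) := by
          conv_lhs => rw [← huv mm]
          rw [pc.la]
        rw [hla]
        have hx := hjgen (sc.ϕ a * vB mm, y)
        have hx2 := hjgen (vB mm, y)
        simp only [huv] at hx2
        rw [hx, hx2, F.la_mul]
      · skip
        rw [TBY.la_zero_right, map_zero, F.la_zero_right]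
      · intro ζ η h1 h2
        skip
        rw [TBY.la_add, map_add, h1, h2, map_add, F.la_add]
      · intro c ζ h1
        skip
        rw [TBY.la_smul, map_smul, h1, map_smul, F.la_smul]
    have hjsa : ∀ w w' : F.X, jE.symm (w + w') = jE.symm w + jE.symm w' := by
      intro w w'
      apply hjbij.1
      show jm (jE.symm (w + w')) = jm (jE.symm w + jE.symm w')
      rw [map_add jm, hjsymm, hjsymm, hjsymm]
    have hjss : ∀ (c : ℂ) (w : F.X), jE.symm (c • w) = c • jE.symm w := by
      intro c w
      apply hjbij.1
      show jm (jE.symm (c • w)) = jm (c • jE.symm w)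
      rw [map_smul jm, hjsymm, hjsymm]
    refine ⟨{
      toFun := fun ζ => jE.symm (ξf ζ)
      invFun := fun η => ξE.symm (jm η)
      left_inv := by
        intro ζ
        show ξE.symm (jm (jE.symm (ξf ζ))) = ζ
        rw [hjsymm, hξsymm2]
      right_inv := by
        intro η
        show jE.symm (ξf (ξE.symm (jm η))) = η
        rw [hξsymm, hjsymm2]
      map_add := by
        intro ζ η
        show jE.symm (ξf (ζ + η)) = jE.symm (ξf ζ) + jE.symm (ξf η)
        rw [map_add, hjsa]
      map_smul := by
        intro c ζ
        show jE.symm (ξf (c • ζ)) = c • jE.symm (ξf ζ)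
        rw [map_smul, hjss]
      map_la := by
        intro a ζ
        show jE.symm (ξf (TXB.la a ζ)) = TBY.la a (jE.symm (ξf ζ))
        apply hjbij.1
        show jm (jE.symm (ξf (TXB.la a ζ))) = jm (TBY.la a (jE.symm (ξf ζ)))
        rw [hjsymm, hjla, hjsymm, hξla]
      map_ip := by
        intro ζ η
        show TBY.ip (jE.symm (ξf ζ)) (jE.symm (ξf η)) = TXB.ip ζ η
        rw [← hjip, hjsymm, hjsymm, hξip] }, ⇑jm,
      fun ζ η => map_add jm ζ η, fun c ζ => map_smul jm c ζ, jm.continuous,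
      hjiso.injective, fun b y => hjgen (b, y), ?_⟩
    intro x b
    show jm (jE.symm (ξf (td1.mk2 x (pc.u b)))) = F.sm (sc.φd x) b
    rw [hjsymm]
    exact hξgen (x, b)

end
end

section
/- Let X (over A) and Y (over B) be injective C*-correspondences and let X be a nondegenerate subcorrespondence of Y via (φ̇, ϕ). Let (π, Φ) be the C-covariant representation of X on K(B ⊗_B O_Y) associated to the morphism [B, U_B] : X → Y in ECCor, let (Υ_Y, t_Y) be the universal covariant representation of Y, and let ι : K(B ⊗_B O_Y) → O_Y be the natural C*-algebra isomorphism (composing Ad μ with K(O_Y) ≅ O_Y, where μ(b ⊗ S) = Υ_Y(b)S). Then ι(Φ(x)) = t_Y(φ̇(x)) and ι(π(a)) = Υ_Y(ϕ(a)) for all x ∈ X and a ∈ A; consequently C*(π, Φ) is isomorphic to the C*-subalgebra of O_Y generated by t_Y(φ̇(X)) and Υ_Y(ϕ(A)). -/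
noncomputable section AuxLemmas

universe u

section Basic

variable {V T : Type*} [NormedAddCommGroup V] [NormedSpace ℂ V]
  [NormedAddCommGroup T] [NormedSpace ℂ T]

lemma aux_map_zero {f : V → T} (hfa : ∀ x y, f (x + y) = f x + f y) : f 0 = 0 := by
  have h := hfa 0 0
  rw [add_zero] at h
  exact (left_eq_add.mp h)

lemma aux_map_sub {f : V → T} (hfa : ∀ x y, f (x + y) = f x + f y) (x y : V) :
    f (x - y) = f x - f y := by
  have h := hfa (x - y) y
  rw [sub_add_cancel] at h
  exact eq_sub_of_add_eq h.symm

lemma aux_cont_of_bound {f : V → T} (hfa : ∀ x y, f (x + y) = f x + f y)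
    (C : ℝ) (hb : ∀ x, ‖f x‖ ≤ C * ‖x‖) : Continuous f := by
  refine (LipschitzWith.of_dist_le_mul (K := C.toNNReal) fun x y => ?_).continuous
  rw [dist_eq_norm, dist_eq_norm, ← aux_map_sub hfa]
  calc ‖f (x - y)‖ ≤ C * ‖x - y‖ := hb _
    _ ≤ C.toNNReal * ‖x - y‖ :=
        mul_le_mul_of_nonneg_right (Real.le_coe_toNNReal C) (norm_nonneg _)

lemma aux_clspan_ext {s : Set V} (hs : clspan s = Set.univ) {f g : V → T}
    (hfa : ∀ x y, f (x + y) = f x + f y) (hfs : ∀ (c : ℂ) x, f (c • x) = c • f x)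
    (hga : ∀ x y, g (x + y) = g x + g y) (hgs : ∀ (c : ℂ) x, g (c • x) = c • g x)
    (hfc : Continuous f) (hgc : Continuous g)
    (h : ∀ x ∈ s, f x = g x) : ∀ x, f x = g x := by
  intro x
  have hsub : (Submodule.span ℂ s : Set V) ⊆ {v | f v = g v} := by
    intro v hv
    induction hv using Submodule.span_induction with
    | mem a ha => exact h a ha
    | zero => show f 0 = g 0; rw [aux_map_zero hfa, aux_map_zero hga]
    | add a b _ _ ha hb => show f (a + b) = g (a + b); rw [hfa, hga, ha, hb]
    | smul c a _ ha => show f (c • a) = g (c • a); rw [hfs, hgs, ha]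
  have hcl : closure ((Submodule.span ℂ s : Submodule ℂ V) : Set V) ⊆ {v | f v = g v} :=
    closure_minimal hsub (isClosed_eq hfc hgc)
  exact hcl (by rw [show closure ((Submodule.span ℂ s : Submodule ℂ V) : Set V) = Set.univ from hs]; trivial)

lemma aux_sqrt_le {a b : ℝ} (ha : 0 ≤ a) (hb : 0 ≤ b) (h : a * a ≤ b * b) : a ≤ b := by
  nlinarith

end Basic

end AuxLemmas

section CorrLemmas

variable {A B : Type u} [NonUnitalCStarAlgebra A] [NonUnitalCStarAlgebra B]

namespace Corr

variable (G : Corr A B)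

lemma ip_add₁ (x y z : G.X) : G.ip (x + y) z = G.ip x z + G.ip y z := by
  have h := congrArg star (G.ip_add z x y)
  rw [star_add, G.ip_star, G.ip_star, G.ip_star] at h
  exact h

lemma ip_smul₁ (c : ℂ) (x z : G.X) : G.ip (c • x) z = star c • G.ip x z := by
  have h := congrArg star (G.ip_smul c z x)
  rw [star_smul, G.ip_star, G.ip_star] at h
  exact h

lemma ip_cont₁ (z : G.X) : Continuous fun x => G.ip x z :=
  aux_cont_of_bound (fun x y => G.ip_add₁ x y z) ‖z‖
    (fun x => by rw [mul_comm]; exact G.ip_bound x z)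

lemma ip_cont₂ (z : G.X) : Continuous fun x => G.ip z x :=
  aux_cont_of_bound (G.ip_add z) ‖z‖ (fun x => G.ip_bound z x)

lemma ip_zero₂ (z : G.X) : G.ip z 0 = 0 := aux_map_zero (G.ip_add z)

lemma ip_zero₁ (z : G.X) : G.ip 0 z = 0 := by
  have h := congrArg star (G.ip_zero₂ z)
  rw [star_zero, G.ip_star] at h
  exact h

end Corr

namespace CorrRep

variable {E : Corr A A} {D : Type u} [NonUnitalCStarAlgebra D] (R : CorrRep E D)

lemma π_zero : R.π 0 = 0 := aux_map_zero R.π_add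

lemma t_zero : R.t 0 = 0 := aux_map_zero R.t_add

/-- The representation `π` bundled as a star algebra homomorphism. -/
def πHom : A →⋆ₙₐ[ℂ] D :=
  { toFun := R.π
    map_smul' := R.π_smul
    map_zero' := R.π_zero
    map_add' := R.π_add
    map_mul' := R.π_mul
    map_star' := R.π_star }

lemma π_norm_le_s8 (a : A) : ‖R.π a‖ ≤ ‖a‖ :=
  NonUnitalStarAlgHom.norm_apply_le R.πHom a

lemma t_norm_le_s8 (x : E.X) : ‖R.t x‖ ≤ ‖x‖ := by
  have h : ‖R.t x‖ * ‖R.t x‖ ≤ ‖x‖ * ‖x‖ := by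
    rw [← CStarRing.norm_star_mul_self, R.t_mul]
    calc ‖R.π (E.ip x x)‖ ≤ ‖E.ip x x‖ := R.π_norm_le_s8 _
      _ = ‖x‖ * ‖x‖ := by rw [← E.ip_norm, sq]
  exact aux_sqrt_le (norm_nonneg _) (norm_nonneg _) h

lemma t_cont_s8 : Continuous R.t :=
  aux_cont_of_bound R.t_add 1 (fun x => by rw [one_mul]; exact R.t_norm_le_s8 x)

lemma t_sm_s8 (x : E.X) (b : A) : R.t (E.sm x b) = R.t x * R.π b := by
  set s := E.sm x b with hs
  have hips : E.ip x s = E.ip x x * b := E.ip_sm x x b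
  have hipsx : E.ip s x = star b * E.ip x x := by
    calc E.ip s x = star (E.ip x s) := (E.ip_star x s).symm
      _ = star (E.ip x x * b) := by rw [hips]
      _ = star b * star (E.ip x x) := star_mul _ _
      _ = star b * E.ip x x := by rw [E.ip_star]
  have hipss : E.ip s s = star b * E.ip x x * b := by
    have h := E.ip_sm s x b
    rw [← hs] at h
    rw [h, hipsx]
  set d := R.t s - R.t x * R.π b with hd
  have e1 : star (R.t s) * R.t s = R.π (star b * E.ip x x * b) := by
    rw [R.t_mul, hipss]
  have e2 : star (R.t s) * (R.t x * R.π b) = R.π (star b * E.ip x x * b) := by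
    rw [← mul_assoc, R.t_mul, ← R.π_mul, hipsx]
  have e3 : star (R.t x * R.π b) * R.t s = R.π (star b * E.ip x x * b) := by
    rw [star_mul, ← R.π_star, mul_assoc, R.t_mul, ← R.π_mul, hips, ← mul_assoc]
  have e4 : star (R.t x * R.π b) * (R.t x * R.π b) = R.π (star b * E.ip x x * b) := by
    rw [star_mul, ← R.π_star, mul_assoc (R.π (star b)) (star (R.t x)) _,
      ← mul_assoc (star (R.t x)) (R.t x) (R.π b), R.t_mul, ← R.π_mul, ← R.π_mul,
      ← mul_assoc]
  have key : star d * d = 0 := by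
    have expand : star d * d =
        (star (R.t s) * R.t s - star (R.t s) * (R.t x * R.π b))
          - (star (R.t x * R.π b) * R.t s - star (R.t x * R.π b) * (R.t x * R.π b)) := by
      rw [hd, star_sub, sub_mul, mul_sub, mul_sub]
    rw [expand, e1, e2, e3, e4, sub_self]
  have hnd : ‖d‖ = 0 := by
    have h := CStarRing.norm_star_mul_self (x := d)
    rw [key, norm_zero] at h
    exact mul_self_eq_zero.mp h.symm
  exact sub_eq_zero.mp (norm_eq_zero.mp hnd)

end CorrRep

end CorrLemmas

noncomputable section

universe u

/-- Let `X`, `Y` be injective with `X` a nondegenerate subcorrespondence of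
`Y` via `(φ̇, ϕ)`, let `(π, Φ)` be the C-covariant representation of `X` on `K(B ⊗_B O_Y)`
associated with the morphism `[B, U_B] : X → Y`, and let `ι : K(B ⊗_B O_Y) → O_Y` be the
natural isomorphism obtained by conjugating with `μ : b ⊗ S ↦ Υ_Y(b)S`.  Then
`ι(Φ(x)) = t_Y(φ̇(x))` and `ι(π(a)) = Υ_Y(ϕ(a))`; consequently `C*(π, Φ)` is carried onto
the C*-subalgebra of `O_Y` generated by `t_Y(φ̇(X))` and `Υ_Y(ϕ(A))`. -/
theorem c_cov_rep_of_subcorrespondence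
    (A B : Type u) [NonUnitalCStarAlgebra A] [NonUnitalCStarAlgebra B]
    (E : Corr A A) (F : Corr B B)
    (hE : E.Injective) (hF : F.Injective)
    (sc : SubCorr E F)
    -- B as a regular A–B correspondence via ϕ, and the morphism [B, U_B] : X → Y
    (Bc : Corr A B) (pc : PullCorr sc.ϕ Bc)
    (TXB : Corr A B) (td1 : TensorData E Bc TXB)
    (TBY : Corr A B) (td2 : TensorData Bc F TBY)
    (U : CorrIso TXB TBY)
    (jm : TBY.X → F.X)
    (jm_add : ∀ ζ η, jm (ζ + η) = jm ζ + jm η)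
    (jm_smul : ∀ (c : ℂ) ζ, jm (c • ζ) = c • jm ζ)
    (jm_cont : Continuous jm) (jm_inj : Function.Injective jm)
    (jm_mk : ∀ (b : B) (y : F.X), jm (td2.mk2 (pc.u b) y) = F.la b y)
    (hU : ∀ (x : E.X) (b : B), jm (U.toFun (td1.mk2 x (pc.u b))) = F.sm (sc.φd x) b)
    -- the Cuntz–Pimsner algebra O_Y, and W = B ⊗_B O_Y
    (CPY : CuntzPimsner F)
    (OYc : Corr B CPY.O) (pcY : PullCorr CPY.rep.π OYc)
    (W : Corr A CPY.O) (tdW : TensorData Bc OYc W)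
    -- the canonical map Λ : (B ⊗_B Y) × O_Y → W, (b ⊗ y, S) ↦ b ⊗ t_Y(y)S
    (Λ : TBY.X → CPY.O → W.X)
    (Λ_add : ∀ (S : CPY.O) ζ η, Λ (ζ + η) S = Λ ζ S + Λ η S)
    (Λ_smul : ∀ (S : CPY.O) (c : ℂ) ζ, Λ (c • ζ) S = c • Λ ζ S)
    (Λ_cont : ∀ S : CPY.O, Continuous fun ζ => Λ ζ S)
    (Λ_mk : ∀ (b : B) (y : F.X) (S : CPY.O),
      Λ (td2.mk2 (pc.u b) y) S = tdW.mk2 (pc.u b) (pcY.u (CPY.rep.t y * S)))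
    -- the C-covariant representation (π, Φ) with π = φ_B(·) ⊗ 1 = W.lmul
    (Φ : E.X → (W.X →L[ℂ] W.X))
    (Φ_mk : ∀ (x : E.X) (b : B) (S : CPY.O),
      Φ x (tdW.mk2 (pc.u b) (pcY.u S)) = Λ (U.toFun (td1.mk2 x (pc.u b))) S)
    (Φs : E.X → (W.X →L[ℂ] W.X))
    (Φs_adj : ∀ x : E.X, W.IsAdjointPair (Φ x) (Φs x))
    -- the natural isomorphism K(B ⊗_B O_Y) ≅ O_Y, implemented by conjugation with μ
    (μ : W.X → CPY.O)
    (μ_bij : Function.Bijective μ)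
    (μ_add : ∀ ζ η, μ (ζ + η) = μ ζ + μ η)
    (μ_smul : ∀ (c : ℂ) ζ, μ (c • ζ) = c • μ ζ)
    (μ_cont : Continuous μ)
    (μ_mk : ∀ (b : B) (S : CPY.O), μ (tdW.mk2 (pc.u b) (pcY.u S)) = CPY.rep.π b * S) :
    -- ι(Φ(x)) = t_Y(φ̇(x)) and ι(π(a)) = Υ_Y(ϕ(a))
    (∀ (x : E.X) (ζ : W.X), μ (Φ x ζ) = CPY.rep.t (sc.φd x) * μ ζ) ∧
    (∀ (a : A) (ζ : W.X), μ (W.lmul a ζ) = CPY.rep.π (sc.ϕ a) * μ ζ) ∧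
    -- ι carries C*(π, Φ) onto the subalgebra generated by t_Y(φ̇(X)) and Υ_Y(ϕ(A))
    ({S : CPY.O | ∃ T ∈ closure ((NonUnitalAlgebra.adjoin ℂ
        (Set.range W.lmul ∪ Set.range Φ ∪ Set.range Φs) : NonUnitalSubalgebra ℂ _) :
          Set (W.X →L[ℂ] W.X)), ∀ ζ : W.X, S * μ ζ = μ (T ζ)}
      = closure ((NonUnitalStarAlgebra.adjoin ℂ
          (Set.range (fun x : E.X => CPY.rep.t (sc.φd x)) ∪
           Set.range (fun a : A => CPY.rep.π (sc.ϕ a))) :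
            NonUnitalStarSubalgebra ℂ CPY.O) : Set CPY.O)) := by
  have tcont : Continuous CPY.rep.t := CPY.rep.t_cont_s8
  have tsm : ∀ (y : F.X) (b : B), CPY.rep.t (F.sm y b) = CPY.rep.t y * CPY.rep.π b :=
    CPY.rep.t_sm_s8
  have lmul_apply : ∀ (a : A) (ζ : W.X), W.lmul a ζ = W.la a ζ := fun _ _ => rfl
  have μ0 : μ 0 = 0 := aux_map_zero μ_add
  -- μ ∘ Λ

  have μΛ : ∀ (S : CPY.O) (ζ : TBY.X), μ (Λ ζ S) = CPY.rep.t (jm ζ) * S := by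
    intro S
    refine aux_clspan_ext td2.dense ?_ ?_ ?_ ?_ ?_ ?_ ?_
    · intro ζ η; rw [Λ_add, μ_add]
    · intro c ζ; rw [Λ_smul, μ_smul]
    · intro ζ η; rw [jm_add, CPY.rep.t_add, add_mul]
    · intro c ζ; rw [jm_smul, CPY.rep.t_smul, smul_mul_assoc]
    · exact μ_cont.comp (Λ_cont S)
    · exact (tcont.comp jm_cont).mul continuous_const
    · rintro _ ⟨⟨m, y⟩, rfl⟩
      obtain ⟨b, rfl⟩ := pc.bij.2 m
      show μ (Λ (td2.mk2 (pc.u b) y) S) = CPY.rep.t (jm (td2.mk2 (pc.u b) y)) * S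
      rw [Λ_mk, μ_mk, jm_mk, ← CPY.rep.mul_t, mul_assoc]
  -- goal 1
  have hμt : ∀ (x : E.X) (ζ : W.X), μ (Φ x ζ) = CPY.rep.t (sc.φd x) * μ ζ := by
    intro x
    refine aux_clspan_ext tdW.dense ?_ ?_ ?_ ?_ ?_ ?_ ?_
    · intro ζ η; rw [map_add, μ_add]
    · intro c ζ; rw [map_smul, μ_smul]
    · intro ζ η; rw [μ_add, mul_add]
    · intro c ζ; rw [μ_smul, mul_smul_comm]
    · exact μ_cont.comp (Φ x).continuous
    · exact continuous_const.mul μ_cont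
    · rintro _ ⟨⟨m, w⟩, rfl⟩
      obtain ⟨b, rfl⟩ := pc.bij.2 m
      obtain ⟨S, rfl⟩ := pcY.bij.2 w
      show μ (Φ x (tdW.mk2 (pc.u b) (pcY.u S)))
        = CPY.rep.t (sc.φd x) * μ (tdW.mk2 (pc.u b) (pcY.u S))
      rw [Φ_mk, μΛ, hU, tsm, μ_mk, mul_assoc]
  -- goal 2
  have hμπ : ∀ (a : A) (ζ : W.X), μ (W.lmul a ζ) = CPY.rep.π (sc.ϕ a) * μ ζ := by
    intro a
    refine aux_clspan_ext tdW.dense ?_ ?_ ?_ ?_ ?_ ?_ ?_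
    · intro ζ η; rw [map_add, μ_add]
    · intro c ζ; rw [map_smul, μ_smul]
    · intro ζ η; rw [μ_add, mul_add]
    · intro c ζ; rw [μ_smul, mul_smul_comm]
    · exact μ_cont.comp (W.lmul a).continuous
    · exact continuous_const.mul μ_cont
    · rintro _ ⟨⟨m, w⟩, rfl⟩
      obtain ⟨b, rfl⟩ := pc.bij.2 m
      obtain ⟨S, rfl⟩ := pcY.bij.2 w
      show μ (W.lmul a (tdW.mk2 (pc.u b) (pcY.u S)))
        = CPY.rep.π (sc.ϕ a) * μ (tdW.mk2 (pc.u b) (pcY.u S))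
      rw [lmul_apply, tdW.la_mk, pc.la, μ_mk, μ_mk, CPY.rep.π_mul, mul_assoc]
  -- the (B ⊗ O_Y)-inner product through μ
  have stage1 : ∀ (b : B) (S : CPY.O) (η : W.X),
      W.ip (tdW.mk2 (pc.u b) (pcY.u S)) η
        = star (μ (tdW.mk2 (pc.u b) (pcY.u S))) * μ η := by
    intro b S
    refine aux_clspan_ext tdW.dense (W.ip_add _) (fun c η => W.ip_smul c _ η) ?_ ?_
      (W.ip_cont₂ _) (continuous_const.mul μ_cont) ?_
    · intro ζ η; rw [μ_add, mul_add]
    · intro c η; rw [μ_smul, mul_smul_comm]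
    · rintro _ ⟨⟨m, w⟩, rfl⟩
      obtain ⟨b', rfl⟩ := pc.bij.2 m
      obtain ⟨S', rfl⟩ := pcY.bij.2 w
      show W.ip (tdW.mk2 (pc.u b) (pcY.u S)) (tdW.mk2 (pc.u b') (pcY.u S'))
        = star (μ (tdW.mk2 (pc.u b) (pcY.u S))) * μ (tdW.mk2 (pc.u b') (pcY.u S'))
      rw [tdW.ip_mk, pc.ip, pcY.la, pcY.ip, μ_mk, μ_mk, star_mul, ← CPY.rep.π_star,
        CPY.rep.π_mul]
      simp [mul_assoc]
  have hμip : ∀ η ζ : W.X, W.ip η ζ = star (μ η) * μ ζ := by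
    intro η
    refine aux_clspan_ext tdW.dense (W.ip_add η) (fun c ζ => W.ip_smul c η ζ) ?_ ?_
      (W.ip_cont₂ η) (continuous_const.mul μ_cont) ?_
    · intro ζ ξ; rw [μ_add, mul_add]
    · intro c ζ; rw [μ_smul, mul_smul_comm]
    · rintro _ ⟨⟨m, w⟩, rfl⟩
      obtain ⟨b, rfl⟩ := pc.bij.2 m
      obtain ⟨S, rfl⟩ := pcY.bij.2 w
      show W.ip η (tdW.mk2 (pc.u b) (pcY.u S))
        = star (μ η) * μ (tdW.mk2 (pc.u b) (pcY.u S))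
      rw [← W.ip_star, stage1, star_mul, star_star]
  -- μ is isometric
  have μiso : ∀ ζ : W.X, ‖μ ζ‖ = ‖ζ‖ := by
    intro ζ
    have h : ‖μ ζ‖ * ‖μ ζ‖ = ‖ζ‖ * ‖ζ‖ := by
      rw [← CStarRing.norm_star_mul_self, ← hμip, ← sq, ← W.ip_norm]
    exact le_antisymm (aux_sqrt_le (norm_nonneg _) (norm_nonneg _) h.le)
      (aux_sqrt_le (norm_nonneg _) (norm_nonneg _) h.ge)
  -- a C*-algebra element killed by right multiplication is zero
  have hzero : ∀ S : CPY.O, (∀ R : CPY.O, S * R = 0) → S = 0 := by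
    intro S h
    have hh := CStarRing.norm_self_mul_star (x := S)
    rw [h (star S), norm_zero] at hh
    exact norm_eq_zero.mp (mul_self_eq_zero.mp hh.symm)
  -- norm comparisons between an operator and its conjugate under μ
  have normTS : ∀ (S : CPY.O) (T : W.X →L[ℂ] W.X),
      (∀ ζ, S * μ ζ = μ (T ζ)) → ‖T‖ ≤ ‖S‖ := by
    intro S T h
    refine ContinuousLinearMap.opNorm_le_bound _ (norm_nonneg S) fun ζ => ?_
    rw [← μiso (T ζ), ← h ζ]
    calc ‖S * μ ζ‖ ≤ ‖S‖ * ‖μ ζ‖ := norm_mul_le _ _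
      _ = ‖S‖ * ‖ζ‖ := by rw [μiso]
  have normST : ∀ (S : CPY.O) (T : W.X →L[ℂ] W.X),
      (∀ ζ, S * μ ζ = μ (T ζ)) → ‖S‖ ≤ ‖T‖ := by
    intro S T h
    have hb : ∀ R : CPY.O, ‖S * R‖ ≤ ‖T‖ * ‖R‖ := by
      intro R
      obtain ⟨ζ, rfl⟩ := μ_bij.2 R
      rw [h ζ, μiso, μiso]
      exact T.le_opNorm ζ
    rcases eq_or_ne ‖S‖ 0 with h0 | h0
    · rw [h0]; exact norm_nonneg T
    · have h1 : ‖S‖ * ‖S‖ ≤ ‖T‖ * ‖S‖ := by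
        calc ‖S‖ * ‖S‖ = ‖S * star S‖ := (CStarRing.norm_self_mul_star).symm
          _ ≤ ‖T‖ * ‖star S‖ := hb _
          _ = ‖T‖ * ‖S‖ := by rw [norm_star]
      exact le_of_mul_le_mul_right h1 (lt_of_le_of_ne (norm_nonneg S) (Ne.symm h0))
  -- passing to adjoints through μ
  have hstar : ∀ (S : CPY.O) (T T' : W.X →L[ℂ] W.X), W.IsAdjointPair T T' →
      (∀ ζ, S * μ ζ = μ (T ζ)) → ∀ ζ, star S * μ ζ = μ (T' ζ) := by
    intro S T T' hadj h ζ
    have key : ∀ η : W.X, star (μ η) * (star S * μ ζ - μ (T' ζ)) = 0 := by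
      intro η
      have h1 : star (μ η) * (star S * μ ζ) = star (μ η) * μ (T' ζ) := by
        rw [← mul_assoc, ← star_mul, h η, ← hμip, hadj, hμip]
      rw [mul_sub, h1, sub_self]
    obtain ⟨η, hη⟩ := μ_bij.2 (star S * μ ζ - μ (T' ζ))
    have h2 := key η
    rw [hη] at h2
    have h3 := CStarRing.norm_star_mul_self (x := star S * μ ζ - μ (T' ζ))
    rw [h2, norm_zero] at h3
    exact sub_eq_zero.mp (norm_eq_zero.mp (mul_self_eq_zero.mp h3.symm))
  -- adjoint pairs are symmetric
  have adj_symm : ∀ T T' : W.X →L[ℂ] W.X, W.IsAdjointPair T T' → W.IsAdjointPair T' T := by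
    intro T T' h ξ η
    calc W.ip (T' ξ) η = star (W.ip η (T' ξ)) := (W.ip_star η _).symm
      _ = star (W.ip (T η) ξ) := by rw [← h]
      _ = W.ip ξ (T η) := W.ip_star _ _
  have hadj_lmul : ∀ a : A, W.IsAdjointPair (W.lmul a) (W.lmul (star a)) := by
    intro a ξ η
    exact W.la_adj a ξ η
  -- intertwiners of differences
  have hsubint : ∀ (S₁ S₂ : CPY.O) (T₁ T₂ : W.X →L[ℂ] W.X),
      (∀ ζ, S₁ * μ ζ = μ (T₁ ζ)) → (∀ ζ, S₂ * μ ζ = μ (T₂ ζ)) →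
      ∀ ζ, (S₁ - S₂) * μ ζ = μ ((T₁ - T₂) ζ) := by
    intro S₁ S₂ T₁ T₂ h₁ h₂ ζ
    rw [sub_mul, h₁, h₂, ContinuousLinearMap.sub_apply, aux_map_sub μ_add]
  refine ⟨hμt, hμπ, ?_⟩
  -- names for the two algebras
  set Dclo : NonUnitalSubalgebra ℂ (W.X →L[ℂ] W.X) :=
    (NonUnitalAlgebra.adjoin ℂ
      (Set.range W.lmul ∪ Set.range Φ ∪ Set.range Φs)).topologicalClosure with hDclo
  set Gclo : NonUnitalStarSubalgebra ℂ CPY.O :=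
    (NonUnitalStarAlgebra.adjoin ℂ
      (Set.range (fun x : E.X => CPY.rep.t (sc.φd x)) ∪
       Set.range (fun a : A => CPY.rep.π (sc.ϕ a)))).topologicalClosure with hGclo
  have hDc : (closure ((NonUnitalAlgebra.adjoin ℂ
      (Set.range W.lmul ∪ Set.range Φ ∪ Set.range Φs) : NonUnitalSubalgebra ℂ _) :
        Set (W.X →L[ℂ] W.X))) = (Dclo : Set (W.X →L[ℂ] W.X)) := rfl
  have hGc : (closure ((NonUnitalStarAlgebra.adjoin ℂ
      (Set.range (fun x : E.X => CPY.rep.t (sc.φd x)) ∪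
       Set.range (fun a : A => CPY.rep.π (sc.ϕ a))) : NonUnitalStarSubalgebra ℂ CPY.O) :
        Set CPY.O)) = (Gclo : Set CPY.O) := rfl
  rw [hDc, hGc]
  -- generator memberships
  have hΦmem : ∀ x : E.X, Φ x ∈ Dclo := fun x =>
    subset_closure (NonUnitalAlgebra.subset_adjoin ℂ
      (Set.mem_union_left _ (Set.mem_union_right _ ⟨x, rfl⟩)))
  have hΦsmem : ∀ x : E.X, Φs x ∈ Dclo := fun x =>
    subset_closure (NonUnitalAlgebra.subset_adjoin ℂ (Set.mem_union_right _ ⟨x, rfl⟩))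
  have hlmem : ∀ a : A, W.lmul a ∈ Dclo := fun a =>
    subset_closure (NonUnitalAlgebra.subset_adjoin ℂ
      (Set.mem_union_left _ (Set.mem_union_left _ ⟨a, rfl⟩)))
  have htmem : ∀ x : E.X, CPY.rep.t (sc.φd x) ∈ Gclo := fun x =>
    subset_closure (NonUnitalStarAlgebra.subset_adjoin ℂ _
      (Set.mem_union_left _ ⟨x, rfl⟩))
  have hπmem : ∀ a : A, CPY.rep.π (sc.ϕ a) ∈ Gclo := fun a =>
    subset_closure (NonUnitalStarAlgebra.subset_adjoin ℂ _
      (Set.mem_union_right _ ⟨a, rfl⟩))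
  have hDcloClosed : IsClosed (Dclo : Set (W.X →L[ℂ] W.X)) := isClosed_closure
  have hGcloClosed : IsClosed (Gclo : Set CPY.O) := isClosed_closure
  apply Set.Subset.antisymm
  · -- the image of C*(π,Φ) is contained in the subalgebra generated by t(φd X), π(ϕ A)
    rintro S ⟨T, hT, hST⟩
    have hD1 : (Dclo : Set (W.X →L[ℂ] W.X)) ⊆
        {T' : W.X →L[ℂ] W.X | ∃ S' ∈ Gclo, ∀ ζ, S' * μ ζ = μ (T' ζ)} := by
      have hPclosed : IsClosed
          {T' : W.X →L[ℂ] W.X | ∃ S' ∈ Gclo, ∀ ζ, S' * μ ζ = μ (T' ζ)} := by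
        refine IsSeqClosed.isClosed ?_
        intro Tn T0 hTn hlim
        choose Sn hSnG hSn using hTn
        have hTc : CauchySeq Tn := hlim.cauchySeq
        have hSc : CauchySeq Sn := by
          rw [Metric.cauchySeq_iff] at hTc ⊢
          intro ε hε
          obtain ⟨N, hN⟩ := hTc ε hε
          refine ⟨N, fun n hn m hm => ?_⟩
          have hd : dist (Sn n) (Sn m) ≤ dist (Tn n) (Tn m) := by
            rw [dist_eq_norm, dist_eq_norm]
            exact normST _ _ (hsubint _ _ _ _ (hSn n) (hSn m))
          exact lt_of_le_of_lt hd (hN n hn m hm)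
        obtain ⟨S0, hS0⟩ := cauchySeq_tendsto_of_complete hSc
        have hS0G : S0 ∈ Gclo :=
          hGcloClosed.mem_of_tendsto hS0 (Filter.Eventually.of_forall hSnG)
        refine ⟨S0, hS0G, fun ζ => ?_⟩
        have h1 : Filter.Tendsto (fun n => Sn n * μ ζ) Filter.atTop (nhds (S0 * μ ζ)) :=
          hS0.mul tendsto_const_nhds
        have h3 : Filter.Tendsto (fun n => Tn n ζ) Filter.atTop (nhds (T0 ζ)) :=
          (((ContinuousLinearMap.apply ℂ W.X ζ).continuous).tendsto T0).comp hlim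
        have h2 : Filter.Tendsto (fun n => μ (Tn n ζ)) Filter.atTop (nhds (μ (T0 ζ))) :=
          (μ_cont.tendsto (T0 ζ)).comp h3
        exact tendsto_nhds_unique (h1.congr (fun n => hSn n ζ)) h2
      refine closure_minimal ?_ hPclosed
      let D1sub : NonUnitalSubalgebra ℂ (W.X →L[ℂ] W.X) :=
        { carrier := {T' : W.X →L[ℂ] W.X | ∃ S' ∈ Gclo, ∀ ζ, S' * μ ζ = μ (T' ζ)}
          zero_mem' := ⟨0, zero_mem Gclo, fun ζ => by
            rw [ContinuousLinearMap.zero_apply, μ0, zero_mul]⟩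
          add_mem' := by
            rintro T₁ T₂ ⟨S₁, hS₁, h₁⟩ ⟨S₂, hS₂, h₂⟩
            exact ⟨S₁ + S₂, add_mem hS₁ hS₂, fun ζ => by
              rw [add_mul, h₁, h₂, ContinuousLinearMap.add_apply, μ_add]⟩
          mul_mem' := by
            rintro T₁ T₂ ⟨S₁, hS₁, h₁⟩ ⟨S₂, hS₂, h₂⟩
            exact ⟨S₁ * S₂, mul_mem hS₁ hS₂, fun ζ => by
              rw [mul_assoc, h₂, h₁, ContinuousLinearMap.mul_apply]⟩
          smul_mem' := by
            rintro c T₁ ⟨S₁, hS₁, h₁⟩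
            exact ⟨c • S₁, SMulMemClass.smul_mem c hS₁, fun ζ => by
              rw [smul_mul_assoc, h₁, ContinuousLinearMap.smul_apply, μ_smul]⟩ }
      have hgen : (Set.range W.lmul ∪ Set.range Φ ∪ Set.range Φs) ⊆ D1sub := by
        rintro T' ((⟨a, rfl⟩ | ⟨x, rfl⟩) | ⟨x, rfl⟩)
        · exact ⟨CPY.rep.π (sc.ϕ a), hπmem a, fun ζ => (hμπ a ζ).symm⟩
        · exact ⟨CPY.rep.t (sc.φd x), htmem x, fun ζ => (hμt x ζ).symm⟩
        · exact ⟨star (CPY.rep.t (sc.φd x)), star_mem (htmem x),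
            hstar _ _ _ (Φs_adj x) (fun ζ => (hμt x ζ).symm)⟩
      exact fun T' hT' => (NonUnitalAlgebra.adjoin_le hgen) hT'
    obtain ⟨S', hS'G, hS'⟩ := hD1 hT
    have hSS' : S = S' := by
      have hz : S - S' = 0 := hzero _ (fun R => by
        obtain ⟨ζ, rfl⟩ := μ_bij.2 R
        rw [hsubint S S' T T hST hS' ζ, sub_self, ContinuousLinearMap.zero_apply, μ0])
      exact sub_eq_zero.mp hz
    exact hSS' ▸ hS'G
  · -- the generated subalgebra is contained in the image of C*(π,Φ)
    intro S hS
    have hQ : (Gclo : Set CPY.O) ⊆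
        {S' : CPY.O | ∃ T₁, T₁ ∈ Dclo ∧ ∃ T₂, T₂ ∈ Dclo ∧ W.IsAdjointPair T₁ T₂ ∧
          (∀ ζ, S' * μ ζ = μ (T₁ ζ)) ∧ (∀ ζ, star S' * μ ζ = μ (T₂ ζ))} := by
      have hQclosed : IsClosed
          {S' : CPY.O | ∃ T₁, T₁ ∈ Dclo ∧ ∃ T₂, T₂ ∈ Dclo ∧ W.IsAdjointPair T₁ T₂ ∧
            (∀ ζ, S' * μ ζ = μ (T₁ ζ)) ∧ (∀ ζ, star S' * μ ζ = μ (T₂ ζ))} := by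
        refine IsSeqClosed.isClosed ?_
        intro Sn S0 hSn hlim
        choose Tn hTnD Tn' hTn'D hadjn h1n h2n using hSn
        have hSc : CauchySeq Sn := hlim.cauchySeq
        have hTc : CauchySeq Tn := by
          rw [Metric.cauchySeq_iff] at hSc ⊢
          intro ε hε
          obtain ⟨N, hN⟩ := hSc ε hε
          refine ⟨N, fun n hn m hm => ?_⟩
          have hd : dist (Tn n) (Tn m) ≤ dist (Sn n) (Sn m) := by
            rw [dist_eq_norm, dist_eq_norm]
            exact normTS _ _ (hsubint _ _ _ _ (h1n n) (h1n m))
          exact lt_of_le_of_lt hd (hN n hn m hm)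
        have hT'c : CauchySeq Tn' := by
          have hSc' : CauchySeq Sn := hlim.cauchySeq
          rw [Metric.cauchySeq_iff] at hSc' ⊢
          intro ε hε
          obtain ⟨N, hN⟩ := hSc' ε hε
          refine ⟨N, fun n hn m hm => ?_⟩
          have hd : dist (Tn' n) (Tn' m) ≤ dist (Sn n) (Sn m) := by
            rw [dist_eq_norm, dist_eq_norm, ← norm_star (Sn n - Sn m), star_sub]
            exact normTS _ _ (hsubint _ _ _ _ (h2n n) (h2n m))
          exact lt_of_le_of_lt hd (hN n hn m hm)
        obtain ⟨T, hT⟩ := cauchySeq_tendsto_of_complete hTc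
        obtain ⟨T', hT'⟩ := cauchySeq_tendsto_of_complete hT'c
        have hTD : T ∈ Dclo :=
          hDcloClosed.mem_of_tendsto hT (Filter.Eventually.of_forall hTnD)
        have hT'D : T' ∈ Dclo :=
          hDcloClosed.mem_of_tendsto hT' (Filter.Eventually.of_forall hTn'D)
        have happly : ∀ (Un : ℕ → (W.X →L[ℂ] W.X)) (U0 : W.X →L[ℂ] W.X),
            Filter.Tendsto Un Filter.atTop (nhds U0) → ∀ ζ : W.X,
            Filter.Tendsto (fun n => Un n ζ) Filter.atTop (nhds (U0 ζ)) := by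
          intro Un U0 hU ζ
          exact (((ContinuousLinearMap.apply ℂ W.X ζ).continuous).tendsto U0).comp hU
        refine ⟨T, hTD, T', hT'D, ?_, ?_, ?_⟩
        · intro ξ η
          have l1 : Filter.Tendsto (fun n => W.ip (Tn n ξ) η) Filter.atTop
              (nhds (W.ip (T ξ) η)) :=
            (((W.ip_cont₁ η).tendsto (T ξ))).comp (happly Tn T hT ξ)
          have l2 : Filter.Tendsto (fun n => W.ip ξ (Tn' n η)) Filter.atTop
              (nhds (W.ip ξ (T' η))) :=
            (((W.ip_cont₂ ξ).tendsto (T' η))).comp (happly Tn' T' hT' η)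
          exact tendsto_nhds_unique (l1.congr (fun n => hadjn n ξ η)) l2
        · intro ζ
          have l1 : Filter.Tendsto (fun n => Sn n * μ ζ) Filter.atTop
              (nhds (S0 * μ ζ)) := hlim.mul tendsto_const_nhds
          have l2 : Filter.Tendsto (fun n => μ (Tn n ζ)) Filter.atTop
              (nhds (μ (T ζ))) := (μ_cont.tendsto (T ζ)).comp (happly Tn T hT ζ)
          exact tendsto_nhds_unique (l1.congr (fun n => h1n n ζ)) l2
        · intro ζ
          have l1 : Filter.Tendsto (fun n => star (Sn n) * μ ζ) Filter.atTop
              (nhds (star S0 * μ ζ)) :=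
            ((continuous_star.tendsto S0).comp hlim).mul tendsto_const_nhds
          have l2 : Filter.Tendsto (fun n => μ (Tn' n ζ)) Filter.atTop
              (nhds (μ (T' ζ))) := (μ_cont.tendsto (T' ζ)).comp (happly Tn' T' hT' ζ)
          exact tendsto_nhds_unique (l1.congr (fun n => h2n n ζ)) l2
      refine closure_minimal ?_ hQclosed
      let Qsub : NonUnitalStarSubalgebra ℂ CPY.O :=
        { carrier := {S' : CPY.O | ∃ T₁, T₁ ∈ Dclo ∧ ∃ T₂, T₂ ∈ Dclo ∧
            W.IsAdjointPair T₁ T₂ ∧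
            (∀ ζ, S' * μ ζ = μ (T₁ ζ)) ∧ (∀ ζ, star S' * μ ζ = μ (T₂ ζ))}
          zero_mem' := ⟨0, zero_mem Dclo, 0, zero_mem Dclo,
            fun ξ η => by
              rw [ContinuousLinearMap.zero_apply, ContinuousLinearMap.zero_apply,
                W.ip_zero₁, W.ip_zero₂],
            fun ζ => by rw [ContinuousLinearMap.zero_apply, μ0, zero_mul],
            fun ζ => by rw [ContinuousLinearMap.zero_apply, μ0, star_zero, zero_mul]⟩
          add_mem' := by
            rintro S₁ S₂ ⟨Ta, hTa, Ta', hTa', hadja, ha, ha'⟩ ⟨Tb, hTb, Tb', hTb', hadjb, hb, hb'⟩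
            refine ⟨Ta + Tb, add_mem hTa hTb, Ta' + Tb', add_mem hTa' hTb', ?_, ?_, ?_⟩
            · intro ξ η
              rw [ContinuousLinearMap.add_apply, ContinuousLinearMap.add_apply,
                W.ip_add₁, W.ip_add, hadja, hadjb]
            · intro ζ
              rw [add_mul, ha, hb, ContinuousLinearMap.add_apply, μ_add]
            · intro ζ
              rw [star_add, add_mul, ha', hb', ContinuousLinearMap.add_apply, μ_add]
          mul_mem' := by
            rintro S₁ S₂ ⟨Ta, hTa, Ta', hTa', hadja, ha, ha'⟩ ⟨Tb, hTb, Tb', hTb', hadjb, hb, hb'⟩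
            refine ⟨Ta * Tb, mul_mem hTa hTb, Tb' * Ta', mul_mem hTb' hTa', ?_, ?_, ?_⟩
            · intro ξ η
              rw [ContinuousLinearMap.mul_apply, ContinuousLinearMap.mul_apply,
                hadja, hadjb]
            · intro ζ
              rw [mul_assoc, hb, ha, ContinuousLinearMap.mul_apply]
            · intro ζ
              rw [star_mul, mul_assoc, ha', hb', ContinuousLinearMap.mul_apply]
          smul_mem' := by
            rintro c S₁ ⟨Ta, hTa, Ta', hTa', hadja, ha, ha'⟩
            refine ⟨c • Ta, SMulMemClass.smul_mem c hTa,
              star c • Ta', SMulMemClass.smul_mem (star c) hTa', ?_, ?_, ?_⟩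
            · intro ξ η
              simp only [ContinuousLinearMap.smul_apply]
              rw [W.ip_smul₁, W.ip_smul, hadja]
            · intro ζ
              rw [smul_mul_assoc, ha, ContinuousLinearMap.smul_apply, μ_smul]
            · intro ζ
              rw [star_smul, smul_mul_assoc, ha', ContinuousLinearMap.smul_apply, μ_smul]
          star_mem' := by
            rintro S₁ ⟨Ta, hTa, Ta', hTa', hadja, ha, ha'⟩
            exact ⟨Ta', hTa', Ta, hTa, adj_symm _ _ hadja, ha',
              fun ζ => by rw [star_star]; exact ha ζ⟩ }
      have hgen : (Set.range (fun x : E.X => CPY.rep.t (sc.φd x)) ∪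
          Set.range (fun a : A => CPY.rep.π (sc.ϕ a))) ⊆ Qsub := by
        rintro S' (⟨x, rfl⟩ | ⟨a, rfl⟩)
        · exact ⟨Φ x, hΦmem x, Φs x, hΦsmem x, Φs_adj x, fun ζ => (hμt x ζ).symm,
            hstar _ _ _ (Φs_adj x) (fun ζ => (hμt x ζ).symm)⟩
        · refine ⟨W.lmul a, hlmem a, W.lmul (star a), hlmem (star a), hadj_lmul a,
            fun ζ => (hμπ a ζ).symm, fun ζ => ?_⟩
          rw [← CPY.rep.π_star, ← sc.ϕ_star]
          exact (hμπ (star a) ζ).symm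
      exact fun S' hS' => (NonUnitalStarAlgebra.adjoin_le hgen) hS'
    obtain ⟨T₁, hT₁, T₂, hT₂, hadj, h1, h2⟩ := hQ hS
    exact ⟨T₁, hT₁, h1⟩

end
end
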